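/- arXiv:2309.11631 — 3 statements merged into one kernel-verified Lean document; each statement's English description precedes it below -/
import Mathlib

section
/- Let I be an ideal of R generated by homogeneous elements of a single degree d with dim R/I = 0, and let a_n = reg R/I^n − dn + 1 be the defect sequence of the function reg R/I^n. Then a_n − a_{n+1} ≤ d for all n ≥ 1. -/
/-!
Common setup.

We encode a finitely generated standard graded algebra `R` over a field `k` by the data
`StdGraded k R`: the grading `deg : ℤ → Submodule k R` (an internal direct sum, vanishing
in negative degrees, with `deg 0 = k·1` and `deg (n+1) = deg 1 * deg n`), together with a
finite family `gen` of degree-one elements spanning `deg 1` over `k` (so `R` is generated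
in degree one by finitely many elements).

For homogeneous ideals `B ⊆ A` of `R`, the Castelnuovo–Mumford regularity of the graded
module `A/B` is formalized through the classical characterization
`reg M = max { j - i : β_{i,j}(M) ≠ 0 }`, where `β_{i,j}(M) = dim_k (Tor_i^S(M, k))_j` is
the graded Betti number over a polynomial ring `S = k[X_1, …, X_r]` mapping onto `R` via
the chosen degree-one generators.  These Betti numbers are computed honestly as the
homology of the graded Koszul complex `K(x_1, …, x_r; M)` on the degree-one generators:
`TorNonzero G A B i j` says that this Koszul homology of `A/B` is nonzero in homological
degree `i` and internal degree `j`.  This agrees with the local cohomology definition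
`reg M = max { a(H_m^i(M)) + i : i ≥ 0 }` for finitely generated graded modules over a
standard graded algebra.  Similarly, by a theorem of Trung, the partial regularity
`reg_t M = max { a(H_m^i(M)) + i : i ≤ t }` equals
`max { j - i : β_{i,j}(M) ≠ 0, i ≥ r - t }`, which is taken as the definition
`preg` below.
-/

structure StdGraded (k R : Type) [Field k] [CommRing R] [Algebra k R] where
  deg : ℤ → Submodule k R
  internal : DirectSum.IsInternal deg
  bot_of_neg : ∀ i : ℤ, i < 0 → deg i = ⊥
  deg_zero : deg 0 = 1
  standard : ∀ n : ℕ, deg ((n : ℤ) + 1) = deg 1 * deg (n : ℤ)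
  ngens : ℕ
  gen : Fin ngens → R
  gen_mem : ∀ i, gen i ∈ deg 1
  gen_span : Submodule.span k (Set.range gen) = deg 1

variable {k R : Type} [Field k] [CommRing R] [Algebra k R]

/-- The Koszul differential on the Koszul complex (on the degree-one generators of `R`)
with coefficients in `R`; a function `Finset (Fin r) → R` records the coordinates of an
element of an exterior power component with respect to the basis `e_s`. -/
noncomputable def kosD (G : StdGraded k R) (f : Finset (Fin G.ngens) → R) :
    Finset (Fin G.ngens) → R := fun t =>
  ∑ j ∈ tᶜ, (-1 : R) ^ ((t.filter fun l => l < j).card) * G.gen j * f (insert j t)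

/-- `TorNonzero G A B i j` : the internal degree `j` part of the `i`-th homology of the
Koszul complex of the degree-one generators with coefficients in the graded module `A/B`
is nonzero; equivalently, the graded Betti number `β_{i,j}(A/B)` over a polynomial ring
mapping onto `R` is nonzero. -/
def TorNonzero (G : StdGraded k R) (A B : Ideal R) (i : ℕ) (j : ℤ) : Prop :=
  ∃ f : Finset (Fin G.ngens) → R,
    (∀ s, if s.card = i then f s ∈ A ∧ f s ∈ G.deg (j - (i : ℤ)) else f s = 0) ∧
    (∀ t, kosD G f t ∈ B) ∧
    ¬ ∃ g : Finset (Fin G.ngens) → R,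
        (∀ s, if s.card = i + 1 then g s ∈ A ∧ g s ∈ G.deg (j - (i : ℤ) - 1) else g s = 0) ∧
        (∀ s, f s - kosD G g s ∈ B)

/-- The Castelnuovo–Mumford regularity `reg (A/B) = max { a(H_m^i(A/B)) + i : i ≥ 0 }` of
the graded `R`-module `A/B`, via the graded Betti number characterization
`reg = max { j - i : β_{i,j} ≠ 0 }`. -/
noncomputable def reg (G : StdGraded k R) (A B : Ideal R) : ℤ :=
  sSup {e : ℤ | ∃ (i : ℕ) (j : ℤ), e = j - (i : ℤ) ∧ TorNonzero G A B i j}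

/-- The partial regularity `reg_t (A/B) = max { a(H_m^i(A/B)) + i : 0 ≤ i ≤ t }`, via
Trung's characterization `reg_t M = max { j - i : β_{i,j}(M) ≠ 0, i ≥ r - t }`. -/
noncomputable def preg (G : StdGraded k R) (t : ℕ) (A B : Ideal R) : ℤ :=
  sSup {e : ℤ | ∃ (i : ℕ) (j : ℤ), G.ngens - t ≤ i ∧ e = j - (i : ℤ) ∧ TorNonzero G A B i j}

/-- `I` is a homogeneous (graded) ideal. -/
def IsHomogeneousIdeal (G : StdGraded k R) (I : Ideal R) : Prop :=
  ∃ T : Set R, (∀ s ∈ T, ∃ j : ℤ, s ∈ G.deg j) ∧ I = Ideal.span T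

/-- `I` is generated by forms of the single degree `d` (equigenerated). -/
def GeneratedInDegree (G : StdGraded k R) (d : ℕ) (I : Ideal R) : Prop :=
  ∃ T : Set R, T ⊆ (G.deg (d : ℤ) : Set R) ∧ I = Ideal.span T

/-- The irrelevant maximal graded ideal `m = ⊕_{i > 0} R_i` of the standard graded
algebra `R` (generated by the degree-one part). -/
def irrel (G : StdGraded k R) : Ideal R := Ideal.span (G.deg 1 : Set R)

/-- The saturation `Ĩ = ∪_t (I : m^t)` of an ideal `I`. -/
noncomputable def satIdeal (G : StdGraded k R) (I : Ideal R) : Ideal R :=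
  ⨆ t : ℕ, Submodule.colon I (((irrel G) ^ t : Ideal R) : Set R)

open Classical in
/-- The supremum in `WithBot ℤ` of a set of integers: `⊥` (i.e. `-∞`) if the set is
empty.  (Junk value if the set is unbounded above.) -/
noncomputable def zsupBot (s : Set ℤ) : WithBot ℤ :=
  if s.Nonempty then ((sSup s : ℤ) : WithBot ℤ) else ⊥

/-- The saturation degree `sdeg I = a(Ĩ/I) + 1 = a(H_m^0(R/I)) + 1`: the least degree
from which `Ĩ` and `I` agree, `⊥` (i.e. `-∞`) if `Ĩ = I`. -/
noncomputable def sdegB (G : StdGraded k R) (I : Ideal R) : WithBot ℤ :=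
  zsupBot {a : ℤ | ∃ j : ℤ, a = j + 1 ∧ ∃ y : R, y ∈ G.deg j ∧ y ∈ satIdeal G I ∧ y ∉ I}
section Aux

variable (G : StdGraded k R)

theorem StdGraded.degNat : ∀ n : ℕ, G.deg (n : ℤ) = G.deg 1 ^ n
  | 0 => by simpa using G.deg_zero
  | (n+1) => by
      rw [pow_succ, ← StdGraded.degNat n, mul_comm]
      exact_mod_cast G.standard n

theorem StdGraded.deg_mul_mem {i j : ℤ} {x y : R} (hx : x ∈ G.deg i) (hy : y ∈ G.deg j) :
    x * y ∈ G.deg (i + j) := by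
  rcases lt_or_ge i 0 with hi | hi
  · rw [G.bot_of_neg i hi] at hx
    simp only [Submodule.mem_bot] at hx
    simp [hx]
  rcases lt_or_ge j 0 with hj | hj
  · rw [G.bot_of_neg j hj] at hy
    simp only [Submodule.mem_bot] at hy
    simp [hy]
  lift i to ℕ using hi
  lift j to ℕ using hj
  have : ((i + j : ℕ) : ℤ) = (i : ℤ) + j := by push_cast; ring
  rw [← this, StdGraded.degNat, pow_add]
  exact Submodule.mul_mem_mul (by rwa [← StdGraded.degNat]) (by rwa [← StdGraded.degNat])

noncomputable def StdGraded.gradedRing : GradedRing G.deg :=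
  letI : SetLike.GradedMonoid G.deg :=
    { one_mem := by rw [G.deg_zero]; exact Submodule.one_le.mp le_rfl
      mul_mem := fun {i j x y} hx hy => G.deg_mul_mem hx hy }
  letI : DirectSum.Decomposition G.deg := G.internal.chooseDecomposition
  { }

end Aux
section Aux2

variable (G : StdGraded k R)

/-- The irrelevant ideal as the ideal generated by the chosen generators. -/
noncomputable def StdGraded.M : Ideal R := Ideal.span (Set.range G.gen)

theorem StdGraded.degOne_subset_M : (G.deg 1 : Set R) ⊆ (G.M : Set R) := by
  intro x hx
  rw [← G.gen_span] at hx
  induction hx using Submodule.span_induction with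
  | mem x h => exact Ideal.subset_span h
  | zero => exact (G.M).zero_mem
  | add x y _ _ hx hy => exact (G.M).add_mem hx hy
  | smul c x _ hx =>
      rw [Algebra.smul_def]
      exact Ideal.mul_mem_left _ _ hx

theorem StdGraded.deg_subset_pow_M : ∀ (t : ℕ), ∀ x ∈ G.deg (t : ℤ), x ∈ G.M ^ t
  | 0 => fun x _ => by simp
  | (t+1) => fun x hx => by
      have h1 : G.deg ((t : ℤ) + 1) = G.deg 1 * G.deg (t : ℤ) := G.standard t
      have hx' : x ∈ G.deg 1 * G.deg (t : ℤ) := by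
        rw [← h1]; exact_mod_cast hx
      refine Submodule.mul_induction_on hx' (fun a ha b hb => ?_) (fun a b ha hb => ?_)
      · have := StdGraded.deg_subset_pow_M t b hb
        rw [pow_succ, mul_comm]
        exact Ideal.mul_mem_mul (G.degOne_subset_M ha) this
      · exact Ideal.add_mem _ ha hb

theorem StdGraded.deg_subset_pow_I {I : Ideal R} {N : ℕ} (hMN : G.M ^ N ≤ I) (n : ℕ)
    {j : ℤ} (hj : (N * n : ℕ) ≤ j) : ∀ x ∈ G.deg j, x ∈ I ^ n := by
  intro x hx
  lift j to ℕ using le_trans (by positivity) hj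
  have hj' : N * n ≤ j := by exact_mod_cast hj
  have h1 : x ∈ G.M ^ j := G.deg_subset_pow_M j x hx
  have h2 : G.M ^ j ≤ G.M ^ (N * n) := Ideal.pow_le_pow_right hj'
  have h3 : G.M ^ (N * n) = (G.M ^ N) ^ n := by rw [pow_mul]
  exact (h3 ▸ h2 h1 : x ∈ (G.M ^ N) ^ n) |> fun h => Ideal.pow_right_mono hMN n h

end Aux2
section Aux3

open DirectSum

variable (G : StdGraded k R)

theorem StdGraded.mem_M_or {i : ℤ} {x : R} (hx : x ∈ G.deg i) :
    x ∈ G.M ∨ IsUnit x ∨ x = 0 := by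
  rcases lt_trichotomy i 0 with hi | hi | hi
  · right; right
    rw [G.bot_of_neg i hi] at hx
    simpa using hx
  · subst hi
    rw [G.deg_zero] at hx
    obtain ⟨c, rfl⟩ := Submodule.mem_one.mp hx
    by_cases hc : c = 0
    · right; right; simp [hc]
    · right; left
      exact (isUnit_iff_ne_zero.mpr hc).map (algebraMap k R)
  · left
    have hi' : i = ((i.toNat : ℕ) : ℤ) := by omega
    rw [hi'] at hx
    exact Ideal.pow_le_self (by omega) (G.deg_subset_pow_M i.toNat x hx)

theorem StdGraded.homog_le_M [GradedRing G.deg] {Q : Ideal R} (hQ : Ideal.IsHomogeneous G.deg Q)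
    (hQt : Q ≠ ⊤) : Q ≤ G.M := by
  classical
  intro x hx
  rw [← DirectSum.sum_support_decompose G.deg x]
  refine Ideal.sum_mem _ fun i _ => ?_
  have h1 : (DirectSum.decompose G.deg x i : R) ∈ G.deg i := SetLike.coe_mem _
  have h2 : (DirectSum.decompose G.deg x i : R) ∈ Q := hQ i hx
  rcases G.mem_M_or h1 with h | h | h
  · exact h
  · exact absurd (Ideal.eq_top_of_isUnit_mem Q h2 h) hQt
  · rw [h]; exact Ideal.zero_mem _

/-- The `k`-submodule of positive-degree elements. -/
noncomputable def StdGraded.Hi : Submodule k R := ⨆ i : ℕ, G.deg ((i : ℤ) + 1)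

theorem StdGraded.mul_mem_Hi (r : R) {x : R} (hx : x ∈ G.Hi) : r * x ∈ G.Hi := by
  have hr : r ∈ ⨆ j : ℤ, G.deg j := by
    rw [G.internal.submodule_iSup_eq_top]; trivial
  induction hx using Submodule.iSup_induction' with
  | mem i x hxi =>
      induction hr using Submodule.iSup_induction' with
      | mem j r hrj =>
          rcases lt_or_ge j 0 with hj | hj
          · rw [G.bot_of_neg j hj] at hrj
            simp only [Submodule.mem_bot] at hrj
            simp [hrj, Submodule.zero_mem]
          · have hmem : r * x ∈ G.deg (j + ((i : ℤ) + 1)) := G.deg_mul_mem hrj hxi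
            have hcast : j + ((i : ℤ) + 1) = ((j.toNat + i : ℕ) : ℤ) + 1 := by omega
            rw [hcast] at hmem
            exact Submodule.mem_iSup_of_mem (j.toNat + i) hmem
      | zero => simp [Submodule.zero_mem]
      | add a b _ _ ha hb => rw [add_mul]; exact Submodule.add_mem _ ha hb
  | zero => simp [Submodule.zero_mem]
  | add a b _ _ ha hb => rw [mul_add]; exact Submodule.add_mem _ ha hb

theorem StdGraded.M_subset_Hi : (G.M : Set R) ⊆ (G.Hi : Set R) := by
  intro x hx
  induction hx using Submodule.span_induction with
  | mem x h =>
      obtain ⟨i, rfl⟩ := h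
      have h1 : G.gen i ∈ G.deg (((0 : ℕ) : ℤ) + 1) := by simpa using G.gen_mem i
      exact Submodule.mem_iSup_of_mem 0 h1
  | zero => exact Submodule.zero_mem _
  | add x y _ _ hx hy => exact Submodule.add_mem _ hx hy
  | smul r x _ hx =>
      have : r • x = r * x := rfl
      rw [this]
      exact G.mul_mem_Hi r hx

theorem StdGraded.M_ne_top [Nontrivial R] : G.M ≠ ⊤ := by
  intro h
  have h1 : (1 : R) ∈ G.Hi := G.M_subset_Hi (h ▸ Submodule.mem_top)
  have h0 : (1 : R) ∈ G.deg 0 := by rw [G.deg_zero]; exact Submodule.one_le.mp le_rfl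
  have hind := G.internal.submodule_iSupIndep 0
  have hle : G.Hi ≤ ⨆ j, ⨆ (_ : j ≠ (0 : ℤ)), G.deg j := by
    refine iSup_le fun i => ?_
    exact le_iSup₂_of_le ((i : ℤ) + 1) (by omega) le_rfl
  have : (1 : R) ∈ (⊥ : Submodule k R) := hind.le_bot ⟨h0, hle h1⟩
  simp at this

theorem StdGraded.M_isHomogeneous [GradedRing G.deg] : Ideal.IsHomogeneous G.deg G.M :=
  Ideal.homogeneous_span _ _ fun x hx => by
    obtain ⟨i, rfl⟩ := hx
    exact ⟨1, G.gen_mem i⟩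

theorem StdGraded.M_isPrime [GradedRing G.deg] [Nontrivial R] : G.M.IsPrime := by
  refine G.M_isHomogeneous.isPrime_of_homogeneous_mem_or_mem G.M_ne_top ?_
  rintro x y ⟨a, hx⟩ ⟨b, hy⟩ hxy
  rcases G.mem_M_or hx with h | h | h
  · exact Or.inl h
  · exact Or.inr ((Ideal.unit_mul_mem_iff_mem _ h).mp hxy)
  · exact Or.inl (by rw [h]; exact Ideal.zero_mem _)

end Aux3
section Aux4

theorem dimzero_no_chain {I P₁ P₂ : Ideal R} (hdim : ringKrullDim (R ⧸ I) = 0)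
    (h₁ : P₁.IsPrime) (h₂ : P₂.IsPrime) (hI₁ : I ≤ P₁) (hlt : P₁ < P₂) : False := by
  have hs : Function.Surjective (Ideal.Quotient.mk I) := Ideal.Quotient.mk_surjective
  have hI₂ : I ≤ P₂ := hI₁.trans hlt.le
  have hker : RingHom.ker (Ideal.Quotient.mk I) = I := Ideal.mk_ker
  have hp₁ : (P₁.map (Ideal.Quotient.mk I)).IsPrime :=
    Ideal.map_isPrime_of_surjective hs (by rw [hker]; exact hI₁)
  have hp₂ : (P₂.map (Ideal.Quotient.mk I)).IsPrime :=
    Ideal.map_isPrime_of_surjective hs (by rw [hker]; exact hI₂)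
  have hcomap : ∀ (P : Ideal R), I ≤ P →
      Ideal.comap (Ideal.Quotient.mk I) (P.map (Ideal.Quotient.mk I)) = P := by
    intro P hP
    rw [Ideal.comap_map_of_surjective _ hs, ← RingHom.ker_eq_comap_bot, hker]
    exact sup_eq_left.mpr hP
  have hlt' : P₁.map (Ideal.Quotient.mk I) < P₂.map (Ideal.Quotient.mk I) := by
    refine lt_of_le_of_ne (Ideal.map_mono hlt.le) fun he => ?_
    have : P₁ = P₂ := by
      rw [← hcomap P₁ hI₁, ← hcomap P₂ hI₂, he]
    exact hlt.ne this
  let q₁ : PrimeSpectrum (R ⧸ I) := ⟨P₁.map (Ideal.Quotient.mk I), hp₁⟩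
  let q₂ : PrimeSpectrum (R ⧸ I) := ⟨P₂.map (Ideal.Quotient.mk I), hp₂⟩
  have hq : q₁ < q₂ := hlt'
  let p : LTSeries (PrimeSpectrum (R ⧸ I)) :=
    { length := 1
      toFun := ![q₁, q₂]
      step := fun i => by
        fin_cases i
        simpa using hq }
  have hle := Order.LTSeries.length_le_krullDim p
  rw [show Order.krullDim (PrimeSpectrum (R ⧸ I)) = ringKrullDim (R ⧸ I) from rfl, hdim] at hle
  norm_num [p] at hle

end Aux4
section Aux5

open DirectSum

variable (G : StdGraded k R)

theorem StdGraded.pow_subset_adjoin :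
    ∀ (n : ℕ), ∀ x ∈ (G.deg 1 ^ n : Submodule k R), x ∈ Algebra.adjoin k (Set.range G.gen)
  | 0 => fun x hx => by
      rw [pow_zero] at hx
      obtain ⟨c, rfl⟩ := Submodule.mem_one.mp hx
      exact Subalgebra.algebraMap_mem _ c
  | (n+1) => fun x hx => by
      rw [pow_succ] at hx
      refine Submodule.mul_induction_on hx (fun a ha b hb => ?_) (fun a b ha hb => ?_)
      · have hb' : b ∈ Algebra.adjoin k (Set.range G.gen) := by
          rw [← G.gen_span] at hb
          have : Submodule.span k (Set.range G.gen) ≤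
              Subalgebra.toSubmodule (Algebra.adjoin k (Set.range G.gen)) :=
            Submodule.span_le.mpr fun y hy => Algebra.subset_adjoin hy
          exact this hb
        exact mul_mem (StdGraded.pow_subset_adjoin n a ha) hb'
      · exact add_mem ha hb

theorem StdGraded.adjoin_eq_top : Algebra.adjoin k (Set.range G.gen) = ⊤ := by
  have h : ∀ x : R, x ∈ Algebra.adjoin k (Set.range G.gen) := by
    intro x
    have hx : x ∈ ⨆ j : ℤ, G.deg j := by rw [G.internal.submodule_iSup_eq_top]; trivial
    induction hx using Submodule.iSup_induction' with
    | mem i x hxi =>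
        rcases lt_or_ge i 0 with hi | hi
        · rw [G.bot_of_neg i hi] at hxi
          simp only [Submodule.mem_bot] at hxi
          rw [hxi]
          exact Subalgebra.zero_mem _
        · lift i to ℕ using hi
          rw [G.degNat] at hxi
          exact G.pow_subset_adjoin i x hxi
    | zero => exact Subalgebra.zero_mem _
    | add a b _ _ ha hb => exact Subalgebra.add_mem _ ha hb
  exact top_le_iff.mp fun x _ => h x

include G in
theorem StdGraded.isNoetherian : IsNoetherianRing R := by
  haveI : Algebra.FiniteType k R :=
    ⟨⟨(Set.finite_range G.gen).toFinset, by
        rw [Set.Finite.coe_toFinset]; exact G.adjoin_eq_top⟩⟩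
  exact Algebra.FiniteType.isNoetherianRing k R

theorem StdGraded.M_le_radical [GradedRing G.deg] [Nontrivial R] {I : Ideal R}
    (hI : Ideal.IsHomogeneous G.deg I) (hIM : I ≤ G.M) (hdim : ringKrullDim (R ⧸ I) = 0) :
    G.M ≤ I.radical := by
  rw [Ideal.radical_eq_sInf]
  refine le_sInf ?_
  rintro P ⟨hIP, hP⟩
  haveI := hP
  obtain ⟨Q, hQmem, hQP⟩ := Ideal.exists_minimalPrimes_le hIP
  have hQprime : Q.IsPrime := hQmem.1.1
  have hIQ : I ≤ Q := hQmem.1.2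
  have hcoreprime : (Q.homogeneousCore G.deg).toIdeal.IsPrime := hQprime.homogeneousCore
  have hIcore : I ≤ (Q.homogeneousCore G.deg).toIdeal := by
    conv_lhs => rw [← hI.toIdeal_homogeneousCore_eq_self]
    exact Ideal.homogeneousCore_mono G.deg hIQ
  have hQcore : Q ≤ (Q.homogeneousCore G.deg).toIdeal :=
    hQmem.2 ⟨hcoreprime, hIcore⟩ (Ideal.toIdeal_homogeneousCore_le G.deg Q)
  have hQhom : Ideal.IsHomogeneous G.deg Q := by
    have : Q = (Q.homogeneousCore G.deg).toIdeal :=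
      le_antisymm hQcore (Ideal.toIdeal_homogeneousCore_le G.deg Q)
    rw [this]
    exact HomogeneousIdeal.isHomogeneous _
  have hQM : Q ≤ G.M := G.homog_le_M hQhom hQprime.ne_top
  have hQeq : Q = G.M := by
    by_contra hne
    exact dimzero_no_chain hdim hQprime G.M_isPrime hIQ (lt_of_le_of_ne hQM hne)
  rw [← hQeq]
  exact hQP

theorem StdGraded.exists_pow_M_le [GradedRing G.deg] [Nontrivial R] {I : Ideal R}
    (hI : Ideal.IsHomogeneous G.deg I) (hIM : I ≤ G.M) (hdim : ringKrullDim (R ⧸ I) = 0) :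
    ∃ N : ℕ, G.M ^ N ≤ I := by
  haveI := StdGraded.isNoetherian G
  exact Ideal.exists_pow_le_of_le_radical_of_fg_radical (G.M_le_radical hI hIM hdim)
    (IsNoetherian.noetherian _)

end Aux5
section Aux6

variable (G : StdGraded k R)

/-- The set of degrees where `R/B` is nonzero. -/
def topSet (B : Ideal R) : Set ℤ := {j : ℤ | ∃ y ∈ G.deg j, y ∉ B}

theorem topSet_zero_mem {B : Ideal R} (hBt : B ≠ ⊤) : (0 : ℤ) ∈ topSet G B := by
  refine ⟨1, by rw [G.deg_zero]; exact Submodule.one_le.mp le_rfl, fun h => ?_⟩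
  exact hBt (Ideal.eq_top_iff_one B |>.mpr h)

theorem topSet_bddAbove {B : Ideal R} {N₀ : ℤ}
    (hb : ∀ j : ℤ, N₀ ≤ j → ∀ y ∈ G.deg j, y ∈ B) : ∀ j ∈ topSet G B, j ≤ N₀ - 1 := by
  rintro j ⟨y, hy, hyB⟩
  by_contra h
  exact hyB (hb j (by omega) y hy)

theorem topSet_gt {B : Ideal R} {N₀ : ℤ}
    (hb : ∀ j : ℤ, N₀ ≤ j → ∀ y ∈ G.deg j, y ∈ B) {j : ℤ} (hj : sSup (topSet G B) < j) :
    ∀ y ∈ G.deg j, y ∈ B := by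
  intro y hy
  by_contra hyB
  have hmem : j ∈ topSet G B := ⟨y, hy, hyB⟩
  have := le_csSup ⟨N₀ - 1, fun a ha => topSet_bddAbove G hb a ha⟩ hmem
  omega

theorem tor_top_of_topSet {B : Ideal R} (hBt : B ≠ ⊤) {N₀ : ℤ}
    (hb : ∀ j : ℤ, N₀ ≤ j → ∀ y ∈ G.deg j, y ∈ B) :
    TorNonzero G ⊤ B G.ngens (sSup (topSet G B) + G.ngens) := by
  classical
  set D := sSup (topSet G B) with hD
  obtain ⟨y, hy, hyB⟩ : D ∈ topSet G B :=
    Int.csSup_mem ⟨0, topSet_zero_mem G hBt⟩ ⟨N₀ - 1, fun a ha => topSet_bddAbove G hb a ha⟩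
  refine ⟨fun s => if s = Finset.univ then y else 0, ?_, ?_, ?_⟩
  · intro s
    dsimp only
    by_cases hs : s = Finset.univ
    · subst hs
      rw [if_pos (by simp)]
      rw [if_pos rfl]
      exact ⟨trivial, by simpa using hy⟩
    · rw [if_neg (fun hc => hs (by simpa using (Finset.card_eq_iff_eq_univ _).mp (by simpa using hc))),
        if_neg hs]
  · intro t
    unfold kosD
    refine Ideal.sum_mem _ fun l _ => ?_
    dsimp only
    by_cases hins : insert l t = Finset.univ
    · rw [if_pos hins, mul_assoc]
      refine Ideal.mul_mem_left _ _ ?_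
      exact topSet_gt G hb (show sSup (topSet G B) < 1 + D by rw [← hD]; omega) (G.gen l * y) (G.deg_mul_mem (G.gen_mem l) hy)
    · rw [if_neg hins, mul_zero]
      exact Ideal.zero_mem _
  · rintro ⟨g, hg1, hg2⟩
    have hgz : ∀ s, g s = 0 := by
      intro s
      have hcard : s.card ≠ G.ngens + 1 := by
        have := Finset.card_le_univ s
        simp only [Finset.card_univ, Fintype.card_fin] at this
        omega
      simpa [if_neg hcard] using hg1 s
    have hk0 : ∀ s, kosD G g s = 0 := by
      intro s
      unfold kosD
      simp [hgz]
    have := hg2 Finset.univ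
    dsimp only at this
    rw [hk0, sub_zero, if_pos rfl] at this
    exact hyB this

theorem tor_le_topSet {B : Ideal R} {N₀ : ℤ}
    (hb : ∀ j : ℤ, N₀ ≤ j → ∀ y ∈ G.deg j, y ∈ B) {i : ℕ} {j : ℤ}
    (ht : TorNonzero G ⊤ B i j) : j - (i : ℤ) ≤ sSup (topSet G B) := by
  by_contra h
  push_neg at h
  obtain ⟨f, hf1, hf2, hf3⟩ := ht
  have hfB : ∀ s, f s ∈ B := by
    intro s
    have := hf1 s
    by_cases hc : s.card = i
    · rw [if_pos hc] at this
      exact topSet_gt G hb h _ this.2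
    · rw [if_neg hc] at this
      rw [this]; exact Ideal.zero_mem _
  refine hf3 ⟨fun _ => 0, fun s => ?_, fun s => ?_⟩
  · by_cases hc : s.card = i + 1
    · rw [if_pos hc]
      exact ⟨trivial, Submodule.zero_mem _⟩
    · rw [if_neg hc]
  · have hk0 : kosD G (fun _ => 0) s = 0 := by
      unfold kosD; simp
    rw [hk0, sub_zero]
    exact hfB s

theorem reg_eq_topSet {B : Ideal R} (hBt : B ≠ ⊤) {N₀ : ℤ}
    (hb : ∀ j : ℤ, N₀ ≤ j → ∀ y ∈ G.deg j, y ∈ B) :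
    reg G ⊤ B = sSup (topSet G B) := by
  set D := sSup (topSet G B) with hD
  have hub : ∀ e ∈ {e : ℤ | ∃ (i : ℕ) (j : ℤ), e = j - (i : ℤ) ∧ TorNonzero G ⊤ B i j}, e ≤ D := by
    rintro e ⟨i, j, rfl, ht⟩
    exact tor_le_topSet G hb ht
  have hmem : D ∈ {e : ℤ | ∃ (i : ℕ) (j : ℤ), e = j - (i : ℤ) ∧ TorNonzero G ⊤ B i j} :=
    ⟨G.ngens, D + G.ngens, by ring, tor_top_of_topSet G hBt hb⟩
  exact le_antisymm (csSup_le ⟨D, hmem⟩ hub) (le_csSup ⟨D, hub⟩ hmem)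

end Aux6

/-- If `I` is generated by forms of a single degree `d` and `dim R/I = 0`, then the
defect sequence `aₙ = reg R/Iⁿ - d·n + 1` satisfies `aₙ - aₙ₊₁ ≤ d` for all `n ≥ 1`. -/
theorem stmt9 (G : StdGraded k R) (I : Ideal R) (d : ℕ) (hd : 1 ≤ d)
    (hgen : GeneratedInDegree G d I) (hproper : I ≠ ⊤)
    (hpow : ∀ n : ℕ, 1 ≤ n → I ^ n ≠ ⊥)
    (hdim : ringKrullDim (R ⧸ I) = 0) :
    ∀ n : ℕ, 1 ≤ n →
      (reg G ⊤ (I ^ n) - (d : ℤ) * n + 1) -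
          (reg G ⊤ (I ^ (n + 1)) - (d : ℤ) * (n + 1) + 1) ≤ (d : ℤ) := by
  intro n hn
  haveI : Nontrivial R := by
    rcases subsingleton_or_nontrivial R with h | h
    · exact absurd (Subsingleton.elim I ⊤) hproper
    · exact h
  letI : GradedRing G.deg := G.gradedRing
  obtain ⟨T, hT, hIT⟩ := hgen
  have hIhom : Ideal.IsHomogeneous G.deg I := by
    rw [hIT]; exact Ideal.homogeneous_span _ _ fun x hx => ⟨(d : ℤ), hT hx⟩
  have hIM : I ≤ G.M := by
    rw [hIT]
    refine Ideal.span_le.mpr fun x hx => ?_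
    have hx' : x ∈ G.M ^ d := G.deg_subset_pow_M d x (hT hx)
    exact Ideal.pow_le_self (by omega) hx'
  obtain ⟨N, hN⟩ := G.exists_pow_M_le hIhom hIM hdim
  have key : ∀ m : ℕ, 1 ≤ m → I ^ m ≠ ⊤ ∧
      (∀ j : ℤ, ((N * m : ℕ) : ℤ) ≤ j → ∀ y ∈ G.deg j, y ∈ I ^ m) := by
    intro m hm
    constructor
    · intro h
      have h1 : (1 : R) ∈ I ^ m := h ▸ Submodule.mem_top
      have h2 : I ^ m ≤ I := Ideal.pow_le_self (by omega)
      exact hproper (Ideal.eq_top_iff_one I |>.mpr (h2 h1))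
    · intro j hj y hy
      exact G.deg_subset_pow_I hN m hj y hy
  have h1 := reg_eq_topSet G (key n hn).1 (key n hn).2
  have h2 := reg_eq_topSet G (key (n+1) (by omega)).1 (key (n+1) (by omega)).2
  have hmono : sSup (topSet G (I ^ n)) ≤ sSup (topSet G (I ^ (n+1))) := by
    refine csSup_le_csSup
      ⟨((N * (n+1) : ℕ) : ℤ) - 1, fun a ha => topSet_bddAbove G (key (n+1) (by omega)).2 a ha⟩
      ⟨0, topSet_zero_mem G (key n hn).1⟩ ?_
    rintro j ⟨y, hy, hyB⟩
    exact ⟨y, hy, fun hc => hyB (Ideal.pow_le_pow_right (by omega) hc)⟩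
  rw [h1, h2]
  push_cast
  linarith
end

section
/- Let {c_n}_{n≥0} be a weakly decreasing sequence of positive integers, d ≥ 1 an integer, and m the minimum integer such that c_n = c_m for all n > m. Let S = k[x,y] over a field k, Q = (x^{c_0}, x^{c_1} y^d, ..., x^{c_m} y^{dm}), R = S/Q and I = (y^d, Q)/Q. Then for all n ≥ 1: reg R/I^n = max{d(i+1) + c_i − 2 : i = 0, ..., n−1} if n ≤ m, and reg R/I^n = max{dn + c_m − 2, d(i+1) + c_i − 2 : i = 0, ..., m−1} if n > m. In particular, if c_i − c_{i+1} ≤ d for all i < m, then reg R/I^n = dn + c_{n−1} − 2 for all n ≥ 1. -/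
variable {k R : Type} [Field k] [CommRing R] [Algebra k R]

/-- Main reduction: if the module `R/B` has a nonzero component in degree `N` and
vanishes in all degrees above `N`, then `reg G ⊤ B = N`. -/
theorem reg_eq_of_top (G : StdGraded k R) (B : Ideal R) (N : ℤ)
    (h1 : ∃ y ∈ G.deg N, y ∉ B) (h2 : ∀ j : ℤ, N < j → ∀ y ∈ G.deg j, y ∈ B) :
    reg G ⊤ B = N := by
  obtain ⟨y, hyd, hyB⟩ := h1
  have hN0 : 0 ≤ N := by
    by_contra h
    push_neg at h
    rw [G.bot_of_neg N h] at hyd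
    exact hyB (by simpa using hyd ▸ (Submodule.mem_bot k).mp hyd ▸ B.zero_mem)
  -- the set whose sSup is `reg`
  set S : Set ℤ := {e : ℤ | ∃ (i : ℕ) (j : ℤ), e = j - (i : ℤ) ∧ TorNonzero G ⊤ B i j} with hS
  -- upper bound
  have hub : ∀ e ∈ S, e ≤ N := by
    rintro e ⟨i, j, rfl, f, hf, _, hnb⟩
    by_contra h
    push_neg at h
    apply hnb
    refine ⟨0, fun s => ?_, fun s => ?_⟩
    · split
      · exact ⟨trivial, Submodule.zero_mem _⟩
      · rfl
    · have h0 : kosD G (0 : Finset (Fin G.ngens) → R) s = 0 := by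
        simp [kosD]
      rw [h0, sub_zero]
      have := hf s
      split at this
      · exact h2 (j - i) h (f s) this.2
      · rw [this]; exact B.zero_mem
  -- membership: top Koszul homology
  have hmem : N ∈ S := by
    refine ⟨G.ngens, N + G.ngens, by ring, ?_⟩
    refine ⟨fun s => if s = Finset.univ then y else 0, fun s => ?_, fun t => ?_, ?_⟩
    · beta_reduce
      split
      · rename_i hcard
        have : s = Finset.univ := by
          apply Finset.eq_univ_of_card
          simpa using hcard
        rw [if_pos this]
        refine ⟨trivial, ?_⟩
        convert hyd using 2
        ring
      · rename_i hcard
        rw [if_neg]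
        intro hs
        apply hcard
        rw [hs]
        simp
    · apply Ideal.sum_mem
      intro l hl
      beta_reduce
      by_cases hins : insert l t = Finset.univ
      · rw [if_pos hins]
        apply h2 (N + 1) (by omega)
        have hstd : G.deg (N + 1) = G.deg 1 * G.deg N := by
          have := G.standard N.toNat
          rwa [Int.toNat_of_nonneg hN0] at this
        rw [hstd]
        have hsign : (-1 : R) ^ (Finset.filter (fun l' => l' < l) t).card * G.gen l ∈ G.deg 1 := by
          rcases Nat.even_or_odd (Finset.filter (fun l' => l' < l) t).card with he | ho
          · rw [he.neg_one_pow, one_mul]; exact G.gen_mem l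
          · rw [ho.neg_one_pow, neg_one_mul]; exact Submodule.neg_mem _ (G.gen_mem l)
        exact Submodule.mul_mem_mul hsign hyd
      · rw [if_neg hins, mul_zero]
        exact B.zero_mem
    · rintro ⟨g, hg, hgb⟩
      have hg0 : ∀ s, g s = 0 := by
        intro s
        have := hg s
        rw [if_neg] at this
        · exact this
        · have := Finset.card_le_univ s
          simp only [Finset.card_univ, Fintype.card_fin] at this
          omega
      have := hgb Finset.univ
      beta_reduce at this
      rw [if_pos rfl] at this
      have h0 : kosD G g Finset.univ = 0 := by
        simp [kosD, hg0]
      rw [h0, sub_zero] at this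
      exact hyB this
  rw [reg]
  exact le_antisymm (csSup_le ⟨N, hmem⟩ hub) (le_csSup ⟨N, hub⟩ hmem)
set_option synthInstance.maxHeartbeats 1000000
set_option maxHeartbeats 1000000
open MvPolynomial in
lemma finsupp_two_le (u v : ℕ) (x : Fin 2 →₀ ℕ) :
    Finsupp.single 0 u + Finsupp.single 1 v ≤ x ↔ u ≤ x 0 ∧ v ≤ x 1 := by
  rw [Finsupp.le_def]
  constructor
  · intro h
    refine ⟨?_, ?_⟩
    · have := h 0; simpa [Finsupp.single_apply] using this
    · have := h 1; simpa [Finsupp.single_apply] using this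
  · rintro ⟨h0, h1⟩ i
    fin_cases i
    · simpa [Finsupp.single_apply] using h0
    · simpa [Finsupp.single_apply] using h1

lemma finsupp_two_degree (x : Fin 2 →₀ ℕ) : x.degree = x 0 + x 1 := by
  rw [Finsupp.degree_apply, Finset.sum_subset (Finset.subset_univ _) (by
    intro i _ h
    exact Finsupp.notMem_support_iff.mp h)]
  exact Fin.sum_univ_two x

open MvPolynomial in
theorem key_reg {k : Type} [Field k] (c : ℕ → ℕ) (d : ℕ) (m : ℕ)
    (Q : Ideal (MvPolynomial (Fin 2) k))
    (hQ : Q = Ideal.span {q | ∃ i : ℕ, i ≤ m ∧ q = X 0 ^ c i * X 1 ^ (d * i)})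
    (I : Ideal (MvPolynomial (Fin 2) k ⧸ Q))
    (hI : I = Ideal.map (Ideal.Quotient.mk Q) (Ideal.span {X 1 ^ d}))
    (G : StdGraded k (MvPolynomial (Fin 2) k ⧸ Q))
    (hdeg : ∀ j : ℤ, G.deg j = Submodule.map (Ideal.Quotient.mkₐ k Q).toLinearMap
      (if 0 ≤ j then homogeneousSubmodule (Fin 2) k j.toNat else ⊥))
    (n : ℕ) (N : ℤ) (hN0 : 0 ≤ N)
    (hex : ∃ a b : ℕ, ((a : ℤ) + b = N) ∧ (∀ i ≤ m, ¬(c i ≤ a ∧ d * i ≤ b)) ∧ b < d * n)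
    (hbd : ∀ a b : ℕ, N < (a : ℤ) + b → d * n ≤ b ∨ ∃ i ≤ m, c i ≤ a ∧ d * i ≤ b) :
    reg G ⊤ (I ^ n) = N := by
  classical
  set E : Set (Fin 2 →₀ ℕ) :=
    {e | (∃ i ≤ m, e = Finsupp.single 0 (c i) + Finsupp.single 1 (d * i)) ∨
      e = Finsupp.single 1 (d * n)} with hE
  have hBn : I ^ n = Ideal.map (Ideal.Quotient.mk Q) (Ideal.span {X 1 ^ (d * n)}) := by
    rw [hI, ← Ideal.map_pow, Ideal.span_singleton_pow, pow_mul]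
  have hspan : Ideal.span {(X 1 : MvPolynomial (Fin 2) k) ^ (d * n)} ⊔ Q =
      Ideal.span ((fun s => monomial s (1 : k)) '' E) := by
    rw [hQ, ← Ideal.span_union]
    congr 1
    ext q
    simp only [Set.mem_union, Set.mem_singleton_iff, Set.mem_setOf_eq, Set.mem_image, hE]
    constructor
    · rintro (rfl | ⟨i, hi, rfl⟩)
      · exact ⟨Finsupp.single 1 (d * n), Or.inr rfl, by rw [X_pow_eq_monomial]⟩
      · exact ⟨Finsupp.single 0 (c i) + Finsupp.single 1 (d * i), Or.inl ⟨i, hi, rfl⟩, by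
          rw [X_pow_eq_monomial, X_pow_eq_monomial, monomial_mul, one_mul]⟩
    · rintro ⟨s, (⟨i, hi, rfl⟩ | rfl), rfl⟩
      · exact Or.inr ⟨i, hi, by rw [X_pow_eq_monomial, X_pow_eq_monomial, monomial_mul, one_mul]⟩
      · exact Or.inl (by rw [X_pow_eq_monomial])
  have hmemiff : ∀ p : MvPolynomial (Fin 2) k,
      Ideal.Quotient.mk Q p ∈ I ^ n ↔
        p ∈ Ideal.span ((fun s => monomial s (1 : k)) '' E) := by
    intro p
    rw [hBn, Ideal.mem_quotient_iff_mem_sup, hspan]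
  apply reg_eq_of_top
  · obtain ⟨a, b, hab, hnd, hbn⟩ := hex
    set x0 : Fin 2 →₀ ℕ := Finsupp.single 0 a + Finsupp.single 1 b with hx0
    refine ⟨Ideal.Quotient.mk Q (monomial x0 1), ?_, ?_⟩
    · rw [hdeg, if_pos hN0]
      refine ⟨monomial x0 1, ?_, rfl⟩
      rw [SetLike.mem_coe, mem_homogeneousSubmodule]
      apply isHomogeneous_monomial
      rw [hx0, finsupp_two_degree]
      simp [Finsupp.single_apply]
      omega
    · intro hmem
      rw [hmemiff, mem_ideal_span_monomial_image] at hmem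
      have hx0supp : x0 ∈ (monomial x0 (1 : k)).support := by
        rw [support_monomial, if_neg one_ne_zero]
        exact Finset.mem_singleton_self _
      obtain ⟨si, hsi, hle⟩ := hmem x0 hx0supp
      have hx00 : x0 0 = a := by simp [hx0, Finsupp.single_apply]
      have hx01 : x0 1 = b := by simp [hx0, Finsupp.single_apply]
      rcases hsi with ⟨i, hi, rfl⟩ | rfl
      · rw [finsupp_two_le, hx00, hx01] at hle
        exact hnd i hi hle
      · rw [Finsupp.single_le_iff, hx01] at hle
        omega
  · intro j hj y hy
    rw [hdeg, if_pos (by omega)] at hy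
    obtain ⟨p, hp, rfl⟩ := hy
    show Ideal.Quotient.mk Q p ∈ I ^ n
    rw [hmemiff, mem_ideal_span_monomial_image]
    intro x hx
    have hdegx : (x 0 : ℤ) + x 1 = j := by
      rw [SetLike.mem_coe, mem_homogeneousSubmodule] at hp
      have := hp (mem_support_iff.mp hx)
      rw [show (Finsupp.weight 1 : (Fin 2 →₀ ℕ) →+ ℕ) = Finsupp.weight (fun _ => 1) from rfl,
        ← Finsupp.degree_eq_weight_one, finsupp_two_degree] at this
      omega
    rcases hbd (x 0) (x 1) (by omega) with h | ⟨i, hi, h1, h2⟩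
    · exact ⟨Finsupp.single 1 (d * n), Or.inr rfl, Finsupp.single_le_iff.mpr h⟩
    · exact ⟨Finsupp.single 0 (c i) + Finsupp.single 1 (d * i), Or.inl ⟨i, hi, rfl⟩,
        (finsupp_two_le _ _ _).mpr ⟨h1, h2⟩⟩
set_option synthInstance.maxHeartbeats 1000000 in
set_option maxHeartbeats 1000000 in
open MvPolynomial in
/-- For a weakly decreasing sequence of positive integers `c` stabilizing exactly at
index `m`, with `S = k[x,y]`, `Q = (x^{c_0}, x^{c_1}y^d, …, x^{c_m}y^{dm})`, `R = S/Q`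
and `I = (y^d, Q)/Q`:
`reg R/Iⁿ = max {d(i+1) + c_i - 2 : i = 0, …, n-1}` if `1 ≤ n ≤ m`, and
`reg R/Iⁿ = max {d·n + c_m - 2, d(i+1) + c_i - 2 : i = 0, …, m-1}` if `n > m`.
In particular, if `c_i - c_{i+1} ≤ d` for all `i < m`, then
`reg R/Iⁿ = d·n + c_{n-1} - 2` for all `n ≥ 1`. -/
theorem stmt11 (c : ℕ → ℕ) (hpos : ∀ n, 1 ≤ c n) (hdec : ∀ n, c (n + 1) ≤ c n)
    (d : ℕ) (hd : 1 ≤ d) (m : ℕ)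
    (hm : ∀ n, m < n → c n = c m)
    (hmin : ∀ m' : ℕ, (∀ n, m' < n → c n = c m') → m ≤ m')
    (Q : Ideal (MvPolynomial (Fin 2) k))
    (hQ : Q = Ideal.span {q | ∃ i : ℕ, i ≤ m ∧ q = X 0 ^ c i * X 1 ^ (d * i)})
    (I : Ideal (MvPolynomial (Fin 2) k ⧸ Q))
    (hI : I = Ideal.map (Ideal.Quotient.mk Q) (Ideal.span {X 1 ^ d}))
    (G : StdGraded k (MvPolynomial (Fin 2) k ⧸ Q))
    (hdeg : ∀ j : ℤ, G.deg j = Submodule.map (Ideal.Quotient.mkₐ k Q).toLinearMap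
      (if 0 ≤ j then homogeneousSubmodule (Fin 2) k j.toNat else ⊥)) :
    (∀ n : ℕ, 1 ≤ n → n ≤ m →
      reg G ⊤ (I ^ n) =
        sSup {e : ℤ | ∃ i : ℕ, i < n ∧ e = (d : ℤ) * (i + 1) + c i - 2}) ∧
    (∀ n : ℕ, m < n →
      reg G ⊤ (I ^ n) =
        sSup {e : ℤ | e = (d : ℤ) * n + c m - 2 ∨
          ∃ i : ℕ, i < m ∧ e = (d : ℤ) * (i + 1) + c i - 2}) ∧
    ((∀ i : ℕ, i < m → (c i : ℤ) - c (i + 1) ≤ d) →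
      ∀ n : ℕ, 1 ≤ n → reg G ⊤ (I ^ n) = (d : ℤ) * n + c (n - 1) - 2) := by

  classical
  have cAnti : Antitone c := antitone_nat_of_succ_le hdec
  -- division facts
  have hdivle : ∀ b : ℕ, d * (b / d) ≤ b := fun b => by
    rw [mul_comm]; exact Nat.div_mul_le_self b d
  have hmul1 : ∀ u v : ℕ, 1 ≤ u → 1 ≤ v → 1 ≤ u * v := fun u v hu hv =>
    Nat.one_le_iff_ne_zero.mpr (Nat.mul_ne_zero (by omega) (by omega))
  have hdivlt : ∀ b : ℕ, b < d * (b / d) + d := fun b => by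
    have h1 := Nat.div_add_mod b d
    have h2 : b % d < d := Nat.mod_lt _ (by omega)
    omega
  -- Part 1
  have P1 : ∀ n : ℕ, 1 ≤ n → n ≤ m →
      reg G ⊤ (I ^ n) =
        sSup {e : ℤ | ∃ i : ℕ, i < n ∧ e = (d : ℤ) * (i + 1) + c i - 2} := by
    intro n h1n hnm
    set T : Set ℤ := {e : ℤ | ∃ i : ℕ, i < n ∧ e = (d : ℤ) * (i + 1) + c i - 2} with hT
    have hTim : T = (fun i : ℕ => (d : ℤ) * (i + 1) + c i - 2) '' (Set.Iio n) := by
      ext e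
      simp only [hT, Set.mem_setOf_eq, Set.mem_image, Set.mem_Iio]
      exact ⟨fun ⟨i, h, he⟩ => ⟨i, h, he.symm⟩, fun ⟨i, h, he⟩ => ⟨i, h, he.symm⟩⟩
    have hTfin : T.Finite := hTim ▸ (Set.finite_Iio n).image _
    have hTne : T.Nonempty := ⟨(d : ℤ) * (0 + 1) + c 0 - 2, 0, h1n, rfl⟩
    have hub : ∀ i : ℕ, i < n → (d : ℤ) * (i + 1) + c i - 2 ≤ sSup T := fun i h =>
      le_csSup hTfin.bddAbove ⟨i, h, rfl⟩
    obtain ⟨i0, hi0n, hNi0⟩ := hTne.csSup_mem hTfin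
    have hdi0 : (1 : ℤ) ≤ (d : ℤ) * (i0 + 1) := by
      have : (1 : ℤ) * 1 ≤ (d : ℤ) * (i0 + 1) := by
        apply mul_le_mul <;> push_cast <;> omega
      linarith
    apply key_reg c d m Q hQ I hI G hdeg n (sSup T)
    · have := hpos i0
      omega
    · refine ⟨c i0 - 1, d * (i0 + 1) - 1, ?_, ?_, ?_⟩
      · have h1 : 1 ≤ c i0 := hpos i0
        have h2 : 1 ≤ d * (i0 + 1) := hmul1 d _ hd (by omega)
        rw [Nat.cast_sub h1, Nat.cast_sub h2, hNi0]
        push_cast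
        ring
      · rintro i hi ⟨hca, hdb⟩
        rcases le_or_gt i i0 with h | h
        · have := cAnti h
          have := hpos i0
          omega
        · have : d * (i0 + 1) ≤ d * i := Nat.mul_le_mul_left d h
          have : 1 ≤ d * (i0 + 1) := hmul1 d _ hd (by omega)
          omega
      · have h2 : d * (i0 + 1) ≤ d * n := Nat.mul_le_mul_left d hi0n
        have : 1 ≤ d * (i0 + 1) := hmul1 d _ hd (by omega)
        omega
    · intro a b hab
      by_cases hb : d * n ≤ b
      · exact Or.inl hb
      push_neg at hb
      right
      have hb' : b < n * d := by rw [mul_comm]; exact hb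
      have hin : b / d < n := by
        rw [Nat.div_lt_iff_lt_mul (by omega : 0 < d)]
        exact hb'
      refine ⟨b / d, by omega, ?_, hdivle b⟩
      have h1 := hub (b / d) hin
      have h2 := hdivlt b
      have h3 := hdivle b
      have he1 : (d : ℤ) * ((b / d : ℕ) + 1) = ((d * (b / d) : ℕ) : ℤ) + d := by push_cast; ring
      rw [he1] at h1
      omega
  -- Part 2
  have P2 : ∀ n : ℕ, m < n →
      reg G ⊤ (I ^ n) =
        sSup {e : ℤ | e = (d : ℤ) * n + c m - 2 ∨
          ∃ i : ℕ, i < m ∧ e = (d : ℤ) * (i + 1) + c i - 2} := by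
    intro n hmn
    set T : Set ℤ := {e : ℤ | e = (d : ℤ) * n + c m - 2 ∨
      ∃ i : ℕ, i < m ∧ e = (d : ℤ) * (i + 1) + c i - 2} with hT
    have hTim : T ⊆ insert ((d : ℤ) * n + c m - 2)
        ((fun i : ℕ => (d : ℤ) * (i + 1) + c i - 2) '' (Set.Iio m)) := by
      rintro e (he | ⟨i, hi, he⟩)
      · exact Set.mem_insert_iff.mpr (Or.inl he)
      · exact Set.mem_insert_iff.mpr (Or.inr ⟨i, hi, he.symm⟩)
    have hTfin : T.Finite := Set.Finite.subset (((Set.finite_Iio m).image _).insert _) hTim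
    have hTne : T.Nonempty := ⟨(d : ℤ) * n + c m - 2, Or.inl rfl⟩
    have hubt : (d : ℤ) * n + c m - 2 ≤ sSup T := le_csSup hTfin.bddAbove (Or.inl rfl)
    have hub : ∀ i : ℕ, i < m → (d : ℤ) * (i + 1) + c i - 2 ≤ sSup T := fun i h =>
      le_csSup hTfin.bddAbove (Or.inr ⟨i, h, rfl⟩)
    have hdn1 : (1 : ℤ) ≤ (d : ℤ) * n := by
      have : (1 : ℤ) * 1 ≤ (d : ℤ) * n := by
        apply mul_le_mul <;> push_cast <;> omega
      linarith
    apply key_reg c d m Q hQ I hI G hdeg n (sSup T)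
    · have := hpos m
      omega
    · obtain hN | ⟨i0, hi0m, hNi0⟩ := hTne.csSup_mem hTfin
      · refine ⟨c m - 1, d * n - 1, ?_, ?_, ?_⟩
        · have h1 : 1 ≤ c m := hpos m
          have h2 : 1 ≤ d * n := hmul1 d n hd (by omega)
          rw [Nat.cast_sub h1, Nat.cast_sub h2, hN]
          push_cast
          ring
        · rintro i hi ⟨hca, hdb⟩
          have := cAnti hi
          have := hpos m
          omega
        · have : 1 ≤ d * n := hmul1 d n hd (by omega)
          omega
      · refine ⟨c i0 - 1, d * (i0 + 1) - 1, ?_, ?_, ?_⟩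
        · have h1 : 1 ≤ c i0 := hpos i0
          have h2 : 1 ≤ d * (i0 + 1) := hmul1 d _ hd (by omega)
          rw [Nat.cast_sub h1, Nat.cast_sub h2, hNi0]
          push_cast
          ring
        · rintro i hi ⟨hca, hdb⟩
          rcases le_or_gt i i0 with h | h
          · have := cAnti h
            have := hpos i0
            omega
          · have : d * (i0 + 1) ≤ d * i := Nat.mul_le_mul_left d h
            have : 1 ≤ d * (i0 + 1) := hmul1 d _ hd (by omega)
            omega
        · have h2 : d * (i0 + 1) ≤ d * n := Nat.mul_le_mul_left d (by omega)
          have : 1 ≤ d * (i0 + 1) := hmul1 d _ hd (by omega)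
          omega
    · intro a b hab
      by_cases hb : d * n ≤ b
      · exact Or.inl hb
      push_neg at hb
      right
      rcases lt_or_ge (b / d) m with hc | hc
      · refine ⟨b / d, by omega, ?_, hdivle b⟩
        have h1 := hub (b / d) hc
        have h2 := hdivlt b
        have h3 := hdivle b
        have he1 : (d : ℤ) * ((b / d : ℕ) + 1) = ((d * (b / d) : ℕ) : ℤ) + d := by push_cast; ring
        rw [he1] at h1
        omega
      · refine ⟨m, le_rfl, ?_, ?_⟩
        · -- c m ≤ a
          omega
        · calc d * m ≤ d * (b / d) := Nat.mul_le_mul_left d hc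
            _ ≤ b := hdivle b
  refine ⟨P1, P2, ?_⟩
  -- Part 3
  intro hcv n h1n
  have hchain : ∀ j : ℕ, j ≤ m → ∀ i : ℕ, i ≤ j →
      (d : ℤ) * (i + 1) + c i - 2 ≤ (d : ℤ) * (j + 1) + c j - 2 := by
    intro j
    induction j with
    | zero => intro _ i hi; interval_cases i; exact le_rfl
    | succ j ih =>
      intro hj i hi
      rcases Nat.lt_or_ge i (j + 1) with h | h
      · have step : (d : ℤ) * (j + 1) + c j - 2 ≤ (d : ℤ) * (j + 1 + 1) + c (j + 1) - 2 := by
          have := hcv j (by omega)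
          push_cast
          linarith
        have := ih (by omega) i (by omega)
        push_cast at step this ⊢
        linarith
      · have : i = j + 1 := by omega
        subst this
        exact le_rfl
  rcases le_or_gt n m with hnm | hmn
  · rw [P1 n h1n hnm]
    set T : Set ℤ := {e : ℤ | ∃ i : ℕ, i < n ∧ e = (d : ℤ) * (i + 1) + c i - 2} with hT
    have hTim : T = (fun i : ℕ => (d : ℤ) * (i + 1) + c i - 2) '' (Set.Iio n) := by
      ext e
      simp only [hT, Set.mem_setOf_eq, Set.mem_image, Set.mem_Iio]
      exact ⟨fun ⟨i, h, he⟩ => ⟨i, h, he.symm⟩, fun ⟨i, h, he⟩ => ⟨i, h, he.symm⟩⟩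
    have hTfin : T.Finite := hTim ▸ (Set.finite_Iio n).image _
    have hcast : ((n - 1 : ℕ) : ℤ) = (n : ℤ) - 1 := by
      rw [Nat.cast_sub h1n]; norm_num
    have hmem : (d : ℤ) * n + c (n - 1) - 2 ∈ T := by
      refine ⟨n - 1, by omega, ?_⟩
      rw [hcast]
      ring
    apply le_antisymm
    · refine csSup_le ⟨_, hmem⟩ ?_
      rintro e ⟨i, hi, rfl⟩
      have := hchain (n - 1) (by omega) i (by omega)
      rw [hcast] at this
      have he : (d : ℤ) * ((n : ℤ) - 1 + 1) = (d : ℤ) * n := by ring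
      rw [he] at this
      linarith
    · exact le_csSup hTfin.bddAbove hmem
  · rw [P2 n hmn]
    have hcnm : c (n - 1) = c m := by
      rcases Nat.lt_or_ge m (n - 1) with h | h
      · exact hm (n - 1) h
      · have : n - 1 = m := by omega
        rw [this]
    rw [hcnm]
    set T : Set ℤ := {e : ℤ | e = (d : ℤ) * n + c m - 2 ∨
      ∃ i : ℕ, i < m ∧ e = (d : ℤ) * (i + 1) + c i - 2} with hT
    have hTim : T ⊆ insert ((d : ℤ) * n + c m - 2)
        ((fun i : ℕ => (d : ℤ) * (i + 1) + c i - 2) '' (Set.Iio m)) := by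
      rintro e (he | ⟨i, hi, he⟩)
      · exact Set.mem_insert_iff.mpr (Or.inl he)
      · exact Set.mem_insert_iff.mpr (Or.inr ⟨i, hi, he.symm⟩)
    have hTfin : T.Finite := Set.Finite.subset (((Set.finite_Iio m).image _).insert _) hTim
    apply le_antisymm
    · refine csSup_le ⟨_, Or.inl rfl⟩ ?_
      rintro e (rfl | ⟨i, hi, rfl⟩)
      · exact le_rfl
      · have h1 := hchain m le_rfl i (by omega)
        have h2 : (d : ℤ) * (m + 1) ≤ (d : ℤ) * n := by
          apply mul_le_mul_of_nonneg_left _ (by positivity)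
          push_cast
          omega
        linarith
    · exact le_csSup hTfin.bddAbove (Or.inl rfl)
end

section
/- Let S = R[y_1, ..., y_v] be a bigraded polynomial ring over the standard graded algebra R, with bideg f = (deg f, 0) for homogeneous f ∈ R and bideg y_i = (d_i, 1). Let M be a finitely generated bigraded S-module such that the graded R-module M_n = ⊕_a M_{(a,n)} has finite length for all sufficiently large n. Then either a(M_n) = −∞ (i.e. M_n = 0) for all sufficiently large n, or there exist an index i with slope d_i ∈ {d_1, ..., d_v}, an integer e and n0 such that a(M_n) = d_i·n + e for all n ≥ n0. -/
variable {k R : Type} [Field k] [CommRing R] [Algebra k R]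

open MvPolynomial in
/-- The `(a, b)` bigraded piece of the bigraded polynomial ring `S = R[y₁, …, y_v]`,
where `bideg f = (deg f, 0)` for homogeneous `f ∈ R` and `bideg y_i = (d_i, 1)`. -/
noncomputable def bigradePoly (G : StdGraded k R) {v : ℕ} (dd : Fin v → ℕ) (a b : ℤ) :
    Submodule k (MvPolynomial (Fin v) R) :=
  Submodule.span k {p | ∃ (e : Fin v → ℕ) (r : R),
    r ∈ G.deg (a - ∑ i, (e i : ℤ) * (dd i : ℤ)) ∧ b = ∑ i, (e i : ℤ) ∧
    p = C r * ∏ i, X i ^ e i}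


namespace Aux15

variable {v : ℕ}

/-- total second degree -/
def tot (e : Fin v → ℕ) : ℕ := ∑ j, e j

/-- weighted first degree -/
def wt (dd : Fin v → ℕ) (e : Fin v → ℕ) : ℤ := ∑ j, (e j : ℤ) * (dd j : ℤ)

lemma le_tot (e : Fin v → ℕ) (i : Fin v) : e i ≤ tot e :=
  Finset.single_le_sum (fun j _ => Nat.zero_le (e j)) (Finset.mem_univ i)

lemma finite_level (m : ℕ) : {e : Fin v → ℕ | tot e = m}.Finite := by
  apply Set.Finite.subset (Set.Finite.pi (fun i : Fin v => Set.finite_Iic m))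
  intro e he
  simp only [Set.mem_pi, Set.mem_univ, Set.mem_Iic, forall_true_left] at *
  intro i
  exact he ▸ le_tot e i

/-- the set of first-degrees occurring in `Z`-level `n` (with shift `(α, β)`). -/
def levV (dd : Fin v → ℕ) (Z : Set (Fin v → ℕ)) (α : ℤ) (β : ℕ) (n : ℕ) : Set ℤ :=
  {a : ℤ | ∃ e ∈ Z, n = β + tot e ∧ a = α + wt dd e}

lemma levV_finite (dd : Fin v → ℕ) (Z : Set (Fin v → ℕ)) (α : ℤ) (β n : ℕ) :
    (levV dd Z α β n).Finite := by
  have h : levV dd Z α β n ⊆ (fun e => α + wt dd e) '' {e | tot e = n - β} := by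
    rintro a ⟨e, _, hn, ha⟩
    exact ⟨e, show tot e = n - β by omega, ha.symm⟩
  exact Set.Finite.subset (Set.Finite.image _ (finite_level _)) h

end Aux15

namespace Aux15

variable {v : ℕ}

/-- downward closed set of exponents -/
def IsDown (Z : Set (Fin v → ℕ)) : Prop := ∀ e ∈ Z, ∀ f, f ≤ e → f ∈ Z

lemma step_down (dd : Fin v → ℕ) (e : Fin v → ℕ) (i : Fin v) (hi : e i ≠ 0) :
    Function.update e i (e i - 1) ≤ e ∧ tot (Function.update e i (e i - 1)) + 1 = tot e ∧
      wt dd (Function.update e i (e i - 1)) + dd i = wt dd e := by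
  have hupd : ∀ (g : ℕ → ℤ), ∑ j, g (Function.update e i (e i -1) j) = g (e i - 1) + ∑ j ∈ Finset.univ.erase i, g (e j) := by
    intro g
    rw [← Finset.add_sum_erase _ _ (Finset.mem_univ i)]
    simp only [Function.update_self]
    congr 1
    exact Finset.sum_congr rfl (fun j hj => by
      rw [Function.update_of_ne (Finset.ne_of_mem_erase hj)])
  have h1 : tot e = e i + ∑ j ∈ Finset.univ.erase i, e j :=
    (Finset.add_sum_erase _ _ (Finset.mem_univ i)).symm
  refine ⟨?_, ?_, ?_⟩
  · intro j
    by_cases hj : j = i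
    · subst hj; simp only [Function.update_self]; omega
    · rw [Function.update_of_ne hj]
  · have h2 : tot (Function.update e i (e i - 1)) = (e i - 1) + ∑ j ∈ Finset.univ.erase i, e j := by
      have := hupd (fun x => (x : ℤ))
      have h3 : tot (Function.update e i (e i - 1)) = (e i - 1) + ∑ j ∈ Finset.univ.erase i, e j := by
        unfold tot
        rw [← Finset.add_sum_erase _ _ (Finset.mem_univ i)]
        simp only [Function.update_self]
        congr 1
        exact Finset.sum_congr rfl (fun j hj => by
          rw [Function.update_of_ne (Finset.ne_of_mem_erase hj)])
      exact h3
    omega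
  · unfold wt
    have hA : ∑ j, ((Function.update e i (e i - 1) j : ℤ) * (dd j : ℤ))
        = ((e i - 1 : ℕ) : ℤ) * (dd i : ℤ) + ∑ j ∈ Finset.univ.erase i, ((e j : ℤ) * (dd j : ℤ)) := by
      rw [← Finset.add_sum_erase Finset.univ _ (Finset.mem_univ i)]
      simp only [Function.update_self]
      congr 1
      exact Finset.sum_congr rfl (fun j hj => by
        rw [Function.update_of_ne (Finset.ne_of_mem_erase hj)])
    have hB : ∑ j, ((e j : ℤ) * (dd j : ℤ))
        = (e i : ℤ) * (dd i : ℤ) + ∑ j ∈ Finset.univ.erase i, ((e j : ℤ) * (dd j : ℤ)) :=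
      (Finset.add_sum_erase _ _ (Finset.mem_univ i)).symm
    rw [hA, hB]
    have hc : ((e i - 1 : ℕ) : ℤ) = (e i : ℤ) - 1 := by omega
    rw [hc]; ring

lemma shrink : ∀ (m : ℕ) (e : Fin v → ℕ), tot e = m → ∀ n, n ≤ m → ∃ f, f ≤ e ∧ tot f = n := by
  intro m
  induction m with
  | zero => intro e he n hn; exact ⟨e, le_refl e, by omega⟩
  | succ m ih =>
    intro e he n hn
    rcases Nat.lt_or_ge n (m+1) with h | h
    · have hne : ∃ i, e i ≠ 0 := by
        by_contra hc; push_neg at hc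
        have : tot e = 0 := Finset.sum_eq_zero (fun i _ => hc i)
        omega
      obtain ⟨i, hi⟩ := hne
      obtain ⟨hle, htot, -⟩ := step_down (fun _ => 0) e i hi
      obtain ⟨f, hf1, hf2⟩ := ih (Function.update e i (e i - 1)) (by omega) n (by omega)
      exact ⟨f, le_trans hf1 hle, hf2⟩
    · exact ⟨e, le_refl e, by omega⟩

lemma levels_nonempty (Z : Set (Fin v → ℕ)) (hdown : IsDown Z) (hinf : Z.Infinite) (n : ℕ) :
    ∃ e ∈ Z, tot e = n := by
  have hub : ∃ e ∈ Z, n ≤ tot e := by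
    by_contra hc; push_neg at hc
    apply hinf
    apply Set.Finite.subset (Set.Finite.pi (fun i : Fin v => Set.finite_Iic n))
    intro e he
    simp only [Set.mem_pi, Set.mem_univ, Set.mem_Iic, forall_true_left]
    intro i
    exact le_trans (le_tot e i) (le_of_lt (hc e he))
  obtain ⟨e, he, hn⟩ := hub
  obtain ⟨f, hf1, hf2⟩ := shrink (tot e) e rfl n hn
  exact ⟨f, hdown e he f hf1, hf2⟩

lemma comb_fin (dd : Fin v → ℕ) (Z : Set (Fin v → ℕ)) (hZ : Z.Finite) (α : ℤ) (β : ℕ) :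
    ∃ ν : ℕ, ∀ n : ℕ, ν ≤ n → levV dd Z α β n = ∅ := by
  classical
  refine ⟨β + hZ.toFinset.sup tot + 1, fun n hn => ?_⟩
  ext a
  simp only [Set.mem_empty_iff_false, iff_false]
  rintro ⟨e, he, hn', -⟩
  have : tot e ≤ hZ.toFinset.sup tot := Finset.le_sup (hZ.mem_toFinset.2 he)
  omega

end Aux15

namespace Aux15

variable {v : ℕ}

lemma maxlin {ι : Type} (Q : Finset ι) (hQ : Q.Nonempty) (s : ι → ℕ) (b : ι → ℤ) :
    ∃ q0 ∈ Q, ∃ N : ℕ, ∀ n : ℕ, N ≤ n → ∀ q ∈ Q,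
      (s q : ℤ) * n + b q ≤ (s q0 : ℤ) * n + b q0 := by
  classical
  set smax := Q.sup' hQ s with hsmax
  set Q' := Q.filter (fun q => s q = smax) with hQ'def
  have hQ' : Q'.Nonempty := by
    obtain ⟨q, hq, hs⟩ := Finset.exists_mem_eq_sup' hQ s
    exact ⟨q, Finset.mem_filter.2 ⟨hq, hs.symm⟩⟩
  obtain ⟨q0, hq0, hb0⟩ := Finset.exists_mem_eq_sup' hQ' b
  have hq0Q : q0 ∈ Q := (Finset.mem_filter.1 hq0).1
  have hq0s : s q0 = smax := (Finset.mem_filter.1 hq0).2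
  refine ⟨q0, hq0Q, Q.sup (fun q => (b q - b q0).toNat), fun n hn q hq => ?_⟩
  by_cases hs : s q = smax
  · have hqQ' : q ∈ Q' := Finset.mem_filter.2 ⟨hq, hs⟩
    have hble : b q ≤ b q0 := hb0 ▸ Finset.le_sup' b hqQ'
    have hEq : (s q : ℤ) * n = (s q0 : ℤ) * n := by rw [hs, hq0s]
    linarith
  · have hlt : s q < smax := lt_of_le_of_ne (Finset.le_sup' s hq) hs
    have h1 : (b q - b q0).toNat ≤ n :=
      le_trans (Finset.le_sup (f := fun q => (b q - b q0).toNat) hq) hn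
    have h2 : b q - b q0 ≤ (n : ℤ) := le_trans (Int.self_le_toNat _) (by exact_mod_cast h1)
    have h3 : (s q : ℤ) + 1 ≤ (s q0 : ℤ) := by
      rw [hq0s]; exact_mod_cast hlt
    nlinarith [Int.ofNat_nonneg n]

lemma evconst (h : ℕ → ℤ) (hmono : ∀ n, h (n+1) ≤ h n) (hlb : ∀ n, 0 ≤ h n) :
    ∃ (c : ℤ) (N0 : ℕ), ∀ n : ℕ, N0 ≤ n → h n = c := by
  have hle : ∀ m n, m ≤ n → h n ≤ h m := by
    intro m n hmn
    induction hmn with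
    | refl => exact le_refl _
    | step h' ih => exact le_trans (hmono _) ih
  obtain ⟨lb, ⟨n0, hn0⟩, hlow⟩ := Int.exists_least_of_bdd
    (P := fun z => ∃ n, h n = z) ⟨0, fun z ⟨n, hn⟩ => hn ▸ hlb n⟩ ⟨h 0, 0, rfl⟩
  exact ⟨lb, n0, fun n hn => le_antisymm (hn0 ▸ hle n0 n hn) (hlow _ ⟨n, rfl⟩)⟩

lemma combine {ι : Type} [Fintype ι] (dd : Fin v → ℕ) (V : ι → ℕ → Set ℤ)
    (hdich : ∀ q : ι, (∃ ν, ∀ n : ℕ, ν ≤ n → V q n = ∅) ∨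
      (∃ (i : Fin v) (c : ℤ) (N0 : ℕ), ∀ n : ℕ, N0 ≤ n →
        ((dd i : ℤ) * n + c) ∈ V q n ∧ ∀ a ∈ V q n, a ≤ (dd i : ℤ) * n + c)) :
    (∃ N1, ∀ n : ℕ, N1 ≤ n → ∀ q, V q n = ∅) ∨
      (∃ (i : Fin v) (c : ℤ) (N1 : ℕ), ∀ n : ℕ, N1 ≤ n →
        ((dd i : ℤ) * n + c) ∈ (⋃ q, V q n) ∧ ∀ a ∈ (⋃ q, V q n), a ≤ (dd i : ℤ) * n + c) := by
  classical
  by_cases hall : ∀ q : ι, ∃ ν, ∀ n : ℕ, ν ≤ n → V q n = ∅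
  · left
    choose ν hν using hall
    exact ⟨Finset.univ.sup ν, fun n hn q =>
      hν q n (le_trans (Finset.le_sup (Finset.mem_univ q)) hn)⟩
  · right
    push_neg at hall
    set J : Finset ι := Finset.univ.filter
      (fun q => ¬ ∃ ν, ∀ n : ℕ, ν ≤ n → V q n = ∅) with hJdef
    have hJne : J.Nonempty := by
      obtain ⟨q, hq⟩ := hall
      refine ⟨q, Finset.mem_filter.2 ⟨Finset.mem_univ q, ?_⟩⟩
      rintro ⟨ν, hν⟩
      obtain ⟨n, hn1, hn2⟩ := hq ν
      obtain ⟨a, ha⟩ := hn2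
      rw [hν n hn1] at ha
      exact ha
    have hJne2 := hJne
    obtain ⟨q1, hq1⟩ := hJne2
    have hbr2 : ∀ q ∈ J, ∃ (i : Fin v) (c : ℤ) (N0 : ℕ), ∀ n : ℕ, N0 ≤ n →
        ((dd i : ℤ) * n + c) ∈ V q n ∧ ∀ a ∈ V q n, a ≤ (dd i : ℤ) * n + c := by
      intro q hq
      exact (hdich q).resolve_left (Finset.mem_filter.1 hq).2
    obtain ⟨i1, -, -, -⟩ := hbr2 q1 hq1
    have hdata : ∀ q : ι, ∃ (i : Fin v) (c : ℤ) (N0 : ℕ), q ∈ J → ∀ n : ℕ, N0 ≤ n →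
        ((dd i : ℤ) * n + c) ∈ V q n ∧ ∀ a ∈ V q n, a ≤ (dd i : ℤ) * n + c := by
      intro q
      by_cases hq : q ∈ J
      · obtain ⟨i, c, N0, h⟩ := hbr2 q hq
        exact ⟨i, c, N0, fun _ => h⟩
      · exact ⟨i1, 0, 0, fun h => absurd h hq⟩
    choose iF cF NF hF using hdata
    have hout : ∀ q : ι, ∃ ν, q ∉ J → ∀ n : ℕ, ν ≤ n → V q n = ∅ := by
      intro q
      by_cases hq : q ∈ J
      · exact ⟨0, fun h => absurd hq h⟩
      · have : ∃ ν, ∀ n : ℕ, ν ≤ n → V q n = ∅ := by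
          by_contra hc
          exact hq (Finset.mem_filter.2 ⟨Finset.mem_univ q, hc⟩)
        obtain ⟨ν, hν⟩ := this
        exact ⟨ν, fun _ => hν⟩
    choose νF hνF using hout
    obtain ⟨q0, hq0J, N2, hN2⟩ := maxlin J hJne (fun q => dd (iF q)) cF
    refine ⟨iF q0, cF q0, N2 + (Finset.univ.sup fun q => NF q + νF q), fun n hn => ?_⟩
    have hsupq : ∀ q : ι, NF q + νF q ≤ Finset.univ.sup fun q => NF q + νF q := fun q =>
      Finset.le_sup (f := fun q => NF q + νF q) (Finset.mem_univ q)
    have hNFq : ∀ q : ι, NF q ≤ n := fun q => by have := hsupq q; omega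
    have hνFq : ∀ q : ι, νF q ≤ n := fun q => by have := hsupq q; omega
    constructor
    · exact Set.mem_iUnion.2 ⟨q0, (hF q0 hq0J n (hNFq q0)).1⟩
    · intro a ha
      obtain ⟨q, hq⟩ := Set.mem_iUnion.1 ha
      by_cases hqJ : q ∈ J
      · have h1 : a ≤ (dd (iF q) : ℤ) * n + cF q := (hF q hqJ n (hNFq q)).2 a hq
        have h2 := hN2 n (by omega) q hqJ
        linarith
      · rw [hνF q hqJ n (hνFq q)] at hq
        exact absurd hq (Set.notMem_empty a)

lemma shiftlem (dd : Fin v → ℕ) (Z : Set (Fin v → ℕ)) (α : ℤ) (β : ℕ) (i : Fin v) (c : ℤ)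
    (N0 : ℕ)
    (h : ∀ n : ℕ, N0 ≤ n → ((dd i : ℤ) * n + c) ∈ levV dd Z 0 0 n ∧
      ∀ a ∈ levV dd Z 0 0 n, a ≤ (dd i : ℤ) * n + c) :
    ∀ n : ℕ, β + N0 ≤ n → ((dd i : ℤ) * n + (c + α - (dd i : ℤ) * β)) ∈ levV dd Z α β n ∧
      ∀ a ∈ levV dd Z α β n, a ≤ (dd i : ℤ) * n + (c + α - (dd i : ℤ) * β) := by
  intro n hn
  obtain ⟨hmem, hub⟩ := h (n - β) (by omega)
  have hcast : ((n - β : ℕ) : ℤ) = (n : ℤ) - (β : ℤ) := by omega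
  constructor
  · obtain ⟨e, he, h1, h2⟩ := hmem
    refine ⟨e, he, by omega, by rw [hcast] at h2; linarith⟩
  · rintro a ⟨e, he, h1, h2⟩
    have : a - α ∈ levV dd Z 0 0 (n - β) := ⟨e, he, by omega, by omega⟩
    have := hub _ this
    rw [hcast] at this
    linarith

end Aux15

namespace Aux15

variable {v : ℕ}

lemma tot_add (c f : Fin v → ℕ) : tot (c + f) = tot c + tot f := by
  unfold tot
  rw [← Finset.sum_add_distrib]
  rfl

lemma wt_add (dd : Fin v → ℕ) (c f : Fin v → ℕ) : wt dd (c + f) = wt dd c + wt dd f := by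
  unfold wt
  rw [← Finset.sum_add_distrib]
  refine Finset.sum_congr rfl (fun j _ => ?_)
  have : (c + f) j = c j + f j := rfl
  rw [this]; push_cast; ring

lemma comb0 (dd : Fin v → ℕ) (F : Finset (Fin v)) :
    ∀ (Z : Set (Fin v → ℕ)), IsDown Z → (∀ e ∈ Z, ∀ i, i ∉ F → e i = 0) → Z.Infinite →
      ∃ (i : Fin v) (c : ℤ) (N0 : ℕ), ∀ n : ℕ, N0 ≤ n →
        ((dd i : ℤ) * n + c) ∈ levV dd Z 0 0 n ∧
        ∀ a ∈ levV dd Z 0 0 n, a ≤ (dd i : ℤ) * n + c := by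
  classical
  induction F using Finset.strongInduction with
  | _ F ih =>
    intro Z hdown hsupp hinf
    have hFne : F.Nonempty := by
      rcases Finset.eq_empty_or_nonempty F with rfl | h
      · exfalso
        apply hinf
        apply Set.Finite.subset (Set.finite_singleton (fun _ : Fin v => 0))
        intro e he
        have : e = fun _ => 0 := funext fun i => hsupp e he i (by simp)
        simp [this]
      · exact h
    set D := F.sup' hFne dd with hD
    by_cases hA : ∃ i ∈ F, dd i = D ∧ ∀ B : ℕ, ∃ e ∈ Z, B < e i
    · -- Case A : some maximal-slope direction is unbounded in Z
      obtain ⟨i, hiF, hdi, hub⟩ := hA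
      have hlevne : ∀ n : ℕ, (levV dd Z 0 0 n).Nonempty := by
        intro n
        obtain ⟨e, he, hte⟩ := levels_nonempty Z hdown hinf n
        exact ⟨0 + wt dd e, e, he, by omega, rfl⟩
      have hlevfin := fun n => levV_finite dd Z 0 0 n
      set g : ℕ → ℤ := fun n => sSup (levV dd Z 0 0 n) with hg
      have hgmem : ∀ n, g n ∈ levV dd Z 0 0 n := fun n =>
        Set.Nonempty.csSup_mem (hlevne n) (hlevfin n)
      have hgub : ∀ n, ∀ a ∈ levV dd Z 0 0 n, a ≤ g n := fun n a ha =>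
        le_csSup (Set.Finite.bddAbove (hlevfin n)) ha
      have hstep : ∀ n, g (n+1) ≤ g n + (D : ℤ) := by
        intro n
        obtain ⟨e, he, htote, hwte⟩ := hgmem (n+1)
        have hne0 : ∃ j, e j ≠ 0 := by
          by_contra hc; push_neg at hc
          have : tot e = 0 := Finset.sum_eq_zero fun j _ => hc j
          omega
        obtain ⟨j, hj⟩ := hne0
        have hjF : j ∈ F := by
          by_contra hc; exact hj (hsupp e he j hc)
        obtain ⟨hle, htote', hwte'⟩ := step_down dd e j hj
        have hmem : (0 : ℤ) + wt dd (Function.update e j (e j - 1)) ∈ levV dd Z 0 0 n :=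
          ⟨_, hdown e he _ hle, by omega, rfl⟩
        have h1 := hgub n _ hmem
        have h2 : (dd j : ℤ) ≤ (D : ℤ) := by exact_mod_cast Finset.le_sup' dd hjF
        linarith
      have hlow : ∀ n : ℕ, (D : ℤ) * n ≤ g n := by
        intro n
        obtain ⟨e, he, hni⟩ := hub n
        set e' : Fin v → ℕ := fun j => if j = i then n else 0 with he'
        have hle : e' ≤ e := by
          intro j; by_cases hji : j = i
          · subst hji; simp only [he', if_pos rfl]; omega
          · simp only [he', if_neg hji]; omega
        have htote' : tot e' = n := by
          unfold tot
          simp only [he']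
          rw [Finset.sum_ite_eq' Finset.univ i (fun _ => n)]
          simp
        have hwte' : wt dd e' = (n : ℤ) * (dd i : ℤ) := by
          unfold wt
          have : ∀ j, ((e' j : ℤ) * (dd j : ℤ)) = if j = i then (n : ℤ) * (dd i : ℤ) else 0 := by
            intro j; by_cases hji : j = i
            · subst hji; simp [he']
            · simp [he', hji]
          rw [Finset.sum_congr rfl (fun j _ => this j)]
          rw [Finset.sum_ite_eq' Finset.univ i (fun _ => (n : ℤ) * (dd i : ℤ))]
          simp
        have hmem : (0 : ℤ) + wt dd e' ∈ levV dd Z 0 0 n :=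
          ⟨e', hdown e he e' hle, by omega, rfl⟩
        have h1 := hgub n _ hmem
        rw [hwte'] at h1
        have : (dd i : ℤ) = (D : ℤ) := by exact_mod_cast hdi
        nlinarith [h1]
      obtain ⟨c, N0, hc⟩ := evconst (fun n => g n - (D : ℤ) * n)
        (fun n => by
          have := hstep n
          show g (n+1) - (D : ℤ) * (n+1 : ℕ) ≤ g n - (D : ℤ) * n
          push_cast
          linarith)
        (fun n => by
          have := hlow n
          show (0 : ℤ) ≤ g n - (D : ℤ) * n
          linarith)
      refine ⟨i, c, N0, fun n hn => ?_⟩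
      have hgn : g n = (dd i : ℤ) * n + c := by
        have h3 := hc n hn
        have h3 : g n - (D : ℤ) * n = c := h3
        have : (dd i : ℤ) = (D : ℤ) := by exact_mod_cast hdi
        rw [this]
        linarith
      exact ⟨hgn ▸ hgmem n, fun a ha => hgn ▸ hgub n a ha⟩
    · -- Case B : all maximal-slope directions are bounded in Z
      push_neg at hA
      have hBex : ∀ i : Fin v, ∃ B : ℕ, (i ∈ F ∧ dd i = D) → ∀ e ∈ Z, e i ≤ B := by
        intro i
        by_cases h : i ∈ F ∧ dd i = D
        · obtain ⟨B, hB⟩ := hA i h.1 h.2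
          exact ⟨B, fun _ => hB⟩
        · exact ⟨0, fun hc => absurd hc h⟩
      choose B hB using hBex
      set I : Finset (Fin v) := F.filter (fun i => dd i = D) with hIdef
      have hIne : I.Nonempty := by
        obtain ⟨i, hiF, hid⟩ := Finset.exists_mem_eq_sup' hFne dd
        exact ⟨i, Finset.mem_filter.2 ⟨hiF, hid.symm⟩⟩
      set C : Set (Fin v → ℕ) := {c | ∀ i, (i ∈ I → c i ≤ B i) ∧ (i ∉ I → c i = 0)} with hCdef
      have hCfin : C.Finite := by
        apply Set.Finite.subset (Set.Finite.pi (fun i : Fin v => Set.finite_Iic (B i)))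
        intro c hc
        simp only [Set.mem_pi, Set.mem_univ, Set.mem_Iic, forall_true_left]
        intro i
        by_cases hi : i ∈ I
        · exact (hc i).1 hi
        · rw [(hc i).2 hi]; omega
      set Y : (Fin v → ℕ) → Set (Fin v → ℕ) :=
        fun c => {f | (∀ i, i ∉ F \ I → f i = 0) ∧ c + f ∈ Z} with hYdef
      have hYdown : ∀ c, IsDown (Y c) := by
        intro c f hf f' hf'
        refine ⟨fun i hi => Nat.eq_zero_of_le_zero ((hf.1 i hi) ▸ hf' i), ?_⟩
        exact hdown _ hf.2 _ (fun i => Nat.add_le_add_left (hf' i) (c i))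
      have hdecomp : ∀ n : ℕ, levV dd Z 0 0 n =
          ⋃ (c : ↥C), levV dd (Y c.1) (wt dd c.1) (tot c.1) n := by
        intro n
        ext a
        constructor
        · rintro ⟨e, he, hn, ha⟩
          set cp : Fin v → ℕ := fun i => if i ∈ I then e i else 0 with hcp
          set fp : Fin v → ℕ := fun i => if i ∈ I then 0 else e i with hfp
          have hcpC : cp ∈ C := by
            intro i
            constructor
            · intro hi; simp only [hcp, if_pos hi]
              exact hB i ⟨(Finset.mem_filter.1 hi).1, (Finset.mem_filter.1 hi).2⟩ e he
            · intro hi; simp only [hcp, if_neg hi]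
          have hsum : e = cp + fp := funext fun i => by
            by_cases hi : i ∈ I <;> simp [hcp, hfp, hi]
          have hfpY : fp ∈ Y cp := by
            refine ⟨?_, by rw [← hsum]; exact he⟩
            intro i hi
            by_cases hiI : i ∈ I
            · simp [hfp, hiI]
            · have hiF : i ∉ F := by
                intro hcc; exact hi (Finset.mem_sdiff.2 ⟨hcc, hiI⟩)
              simp [hfp, hiI, hsupp e he i hiF]
          have htote : tot e = tot cp + tot fp := by rw [hsum, tot_add]
          have hwte : wt dd e = wt dd cp + wt dd fp := by rw [hsum, wt_add]
          exact Set.mem_iUnion.2 ⟨⟨cp, hcpC⟩,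
            show a ∈ levV dd (Y cp) (wt dd cp) (tot cp) n from ⟨fp, hfpY, by omega, by linarith⟩⟩
        · intro h
          obtain ⟨cs, f, hfY, hn, ha⟩ := Set.mem_iUnion.1 h
          refine ⟨cs.1 + f, hfY.2, ?_, ?_⟩
          · rw [tot_add]; omega
          · rw [wt_add]; linarith
      have hFI : F \ I ⊂ F := Finset.sdiff_ssubset (Finset.filter_subset _ _) hIne
      haveI := hCfin.fintype
      have hdich : ∀ q : ↥C,
          (∃ ν, ∀ n : ℕ, ν ≤ n → levV dd (Y q.val) (wt dd q.val) (tot q.val) n = ∅) ∨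
          (∃ (i : Fin v) (c' : ℤ) (N0 : ℕ), ∀ n : ℕ, N0 ≤ n →
            ((dd i : ℤ) * n + c') ∈ levV dd (Y q.val) (wt dd q.val) (tot q.val) n ∧
            ∀ a ∈ levV dd (Y q.val) (wt dd q.val) (tot q.val) n, a ≤ (dd i : ℤ) * n + c') := by
        intro q
        by_cases hYinf : (Y q.val).Infinite
        · right
          obtain ⟨i, c', N0, h⟩ := ih (F \ I) hFI (Y q.val) (hYdown q.val)
            (fun f hf i hi => hf.1 i hi) hYinf
          exact ⟨i, _, _, shiftlem dd (Y q.val) (wt dd q.val) (tot q.val) i c' N0 h⟩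
        · left
          exact comb_fin dd (Y q.val) (Set.not_infinite.1 hYinf) _ _
      rcases combine dd (fun (q : ↥C) n => levV dd (Y q.val) (wt dd q.val) (tot q.val) n) hdich with
        ⟨N1, hN1⟩ | ⟨i, c', N1, hN1⟩
      · exfalso
        obtain ⟨e, he, hte⟩ := levels_nonempty Z hdown hinf N1
        have hmem : (0 : ℤ) + wt dd e ∈ levV dd Z 0 0 N1 := ⟨e, he, by omega, rfl⟩
        rw [hdecomp N1] at hmem
        obtain ⟨c, hc⟩ := Set.mem_iUnion.1 hmem
        rw [hN1 N1 (le_refl _) c] at hc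
        exact hc
      · refine ⟨i, c', N1, fun n hn => ?_⟩
        rw [hdecomp n]
        exact hN1 n hn

lemma comb (dd : Fin v → ℕ) (Z : Set (Fin v → ℕ)) (hdown : IsDown Z) (hinf : Z.Infinite)
    (α : ℤ) (β : ℕ) :
    ∃ (i : Fin v) (c : ℤ) (N0 : ℕ), ∀ n : ℕ, N0 ≤ n →
      ((dd i : ℤ) * n + c) ∈ levV dd Z α β n ∧
      ∀ a ∈ levV dd Z α β n, a ≤ (dd i : ℤ) * n + c := by
  obtain ⟨i, c, N0, h⟩ := comb0 dd Finset.univ Z hdown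
    (fun e _ i hi => absurd (Finset.mem_univ i) hi) hinf
  exact ⟨i, _, _, shiftlem dd Z α β i c N0 h⟩

end Aux15


open MvPolynomial in
theorem key15 {k R : Type} [Field k] [CommRing R] [Algebra k R]
    (G : StdGraded k R) (v : ℕ) (dd : Fin v → ℕ)
    (M : Type) [AddCommGroup M] [Module (MvPolynomial (Fin v) R) M]
    [Module k M] [IsScalarTower k (MvPolynomial (Fin v) R) M]
    (ℳ : ℤ × ℤ → Submodule k M)
    (hInternal : DirectSum.IsInternal ℳ)
    (hfg : Module.Finite (MvPolynomial (Fin v) R) M)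
    (hsmul : ∀ (a b cg e : ℤ) (p : MvPolynomial (Fin v) R) (x : M),
      p ∈ bigradePoly G dd a b → x ∈ ℳ (cg, e) → p • x ∈ ℳ (a + cg, b + e))
    (hfl : ∃ N : ℕ, ∀ n : ℕ, N ≤ n → {a : ℤ | ℳ (a, (n : ℤ)) ≠ ⊥}.Finite) :
    ∃ (N : ℕ) (P : Set (M × ℤ × ℕ)), P.Finite ∧
      ∀ n : ℕ, N ≤ n → ∀ a : ℤ, (ℳ (a, (n : ℤ)) ≠ ⊥ ↔
        ∃ z ∈ P, ∃ e : Fin v → ℕ,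
          (∏ i, MvPolynomial.X i ^ e i : MvPolynomial (Fin v) R) • z.1 ≠ 0 ∧
          a = z.2.1 + ∑ i, (e i : ℤ) * (dd i : ℤ) ∧
          (n : ℤ) = (z.2.2 : ℤ) + ∑ i, (e i : ℤ)) := by
  classical
  obtain ⟨N, hfin⟩ := hfl
  -- basic bigraded-piece membership lemmas
  have hbig : ∀ (δ : ℤ) (r : R), r ∈ G.deg δ → ∀ e : Fin v → ℕ,
      (MvPolynomial.C r * ∏ i, MvPolynomial.X i ^ e i : MvPolynomial (Fin v) R) ∈
        bigradePoly G dd (δ + ∑ i, (e i : ℤ) * (dd i : ℤ)) (∑ i, (e i : ℤ)) := by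
    intro δ r hr e
    exact Submodule.subset_span ⟨e, r, by rwa [add_sub_cancel_right], rfl, rfl⟩
  have hbigC : ∀ (δ : ℤ) (r : R), r ∈ G.deg δ →
      (MvPolynomial.C r : MvPolynomial (Fin v) R) ∈ bigradePoly G dd δ 0 := by
    intro δ r hr
    have := hbig δ r hr (fun _ => 0)
    simpa using this
  have hbigX : ∀ e : Fin v → ℕ,
      (∏ i, MvPolynomial.X i ^ e i : MvPolynomial (Fin v) R) ∈
        bigradePoly G dd (∑ i, (e i : ℤ) * (dd i : ℤ)) (∑ i, (e i : ℤ)) := by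
    intro e
    have h1 : (1 : R) ∈ G.deg ((∑ i, (e i : ℤ) * (dd i : ℤ)) - (∑ i, (e i : ℤ) * (dd i : ℤ))) := by
      rw [sub_self, G.deg_zero]
      exact Submodule.one_le.mp (le_refl _)
    exact Submodule.subset_span ⟨e, 1, h1, rfl, by rw [map_one, one_mul]⟩
  -- R is a Noetherian ring
  have hdegFG : ∀ δ : ℕ, (G.deg (δ : ℤ)).FG := by
    intro δ
    induction δ with
    | zero =>
      rw [show ((0:ℕ):ℤ) = 0 from rfl, G.deg_zero, Submodule.one_eq_span]
      exact Submodule.fg_span_singleton 1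
    | succ δ ihδ =>
      rw [show ((δ + 1 : ℕ) : ℤ) = (δ : ℤ) + 1 by push_cast; ring, G.standard δ]
      exact Submodule.FG.mul
        (by rw [← G.gen_span]; exact Submodule.fg_span (Set.finite_range G.gen)) ihδ
  have hdegTop : (⨆ δ : ℤ, G.deg δ) = ⊤ := G.internal.submodule_iSup_eq_top
  have hNoethR : IsNoetherianRing R := by
    have hadj : ∀ δ : ℕ, G.deg (δ : ℤ) ≤
        Subalgebra.toSubmodule (Algebra.adjoin k (Set.range G.gen)) := by
      intro δ
      induction δ with
      | zero =>
        rw [show ((0:ℕ):ℤ) = 0 from rfl, G.deg_zero, Submodule.one_eq_span,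
          Submodule.span_le]
        intro x hx
        rw [Set.mem_singleton_iff.mp hx]
        exact one_mem (Algebra.adjoin k (Set.range G.gen))
      | succ δ ihδ =>
        rw [show ((δ + 1 : ℕ) : ℤ) = (δ : ℤ) + 1 by push_cast; ring, G.standard δ]
        apply Submodule.mul_le.mpr
        intro x hx y hy
        have hsp : Submodule.span k (Set.range G.gen) ≤
            Subalgebra.toSubmodule (Algebra.adjoin k (Set.range G.gen)) := by
          rw [Submodule.span_le]; exact Algebra.subset_adjoin
        rw [Subalgebra.mem_toSubmodule _]
        exact mul_mem ((Subalgebra.mem_toSubmodule _).mp (hsp (G.gen_span ▸ hx)))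
          ((Subalgebra.mem_toSubmodule _).mp (ihδ hy))
    have htop : Algebra.adjoin k (Set.range G.gen) = ⊤ := by
      rw [eq_top_iff]
      intro x _
      have hle : (⊤ : Submodule k R) ≤
          Subalgebra.toSubmodule (Algebra.adjoin k (Set.range G.gen)) := by
        rw [← hdegTop]
        apply iSup_le
        intro δ
        rcases le_or_gt 0 δ with h | h
        · rw [← Int.toNat_of_nonneg h]; exact hadj _
        · rw [G.bot_of_neg δ h]; exact bot_le
      exact hle Submodule.mem_top
    have hft : Algebra.FiniteType k R :=
      ⟨⟨(Set.finite_range G.gen).toFinset, by rw [Set.Finite.coe_toFinset]; exact htop⟩⟩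
    exact hft.isNoetherianRing
  haveI := hNoethR
  haveI : IsNoetherianRing (MvPolynomial (Fin v) R) := MvPolynomial.isNoetherianRing
  haveI := hfg
  haveI : IsNoetherian (MvPolynomial (Fin v) R) M :=
    isNoetherian_of_isNoetherianRing_of_finite _ _
  -- generating set data
  set T : Set M := {x | ∃ (aa : ℤ) (nn : ℕ), N ≤ nn ∧ x ∈ ℳ (aa, (nn : ℤ))} with hTdef
  obtain ⟨gs, hgs⟩ := IsNoetherian.noetherian (Submodule.span (MvPolynomial (Fin v) R) T)
  have hsubex : ∀ g : M, ∃ tg : Finset M, g ∈ (gs : Set M) →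
      (↑tg ⊆ T ∧ g ∈ Submodule.span (MvPolynomial (Fin v) R) (tg : Set M)) := by
    intro g
    by_cases hg : g ∈ (gs : Set M)
    · have hgW : g ∈ Submodule.span (MvPolynomial (Fin v) R) T := by
        rw [← hgs]
        exact Submodule.subset_span hg
      obtain ⟨tg, htg1, htg2⟩ := Submodule.mem_span_finite_of_mem_span hgW
      exact ⟨tg, fun _ => ⟨htg1, htg2⟩⟩
    · exact ⟨∅, fun h => absurd h hg⟩
  choose tg htg using hsubex
  set T' : Finset M := gs.biUnion tg with hT'def
  have hT'T : (T' : Set M) ⊆ T := by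
    intro x hx
    obtain ⟨g, hg, hxg⟩ := Finset.mem_biUnion.mp hx
    exact (htg g (Finset.mem_coe.mpr hg)).1 hxg
  have hWT' : Submodule.span (MvPolynomial (Fin v) R) ((T' : Set M)) =
      Submodule.span (MvPolynomial (Fin v) R) T := by
    apply le_antisymm
    · exact Submodule.span_mono hT'T
    · rw [← hgs]
      apply Submodule.span_le.mpr
      intro g hg
      have h2 := (htg g hg).2
      have hmono : Submodule.span (MvPolynomial (Fin v) R) ((tg g : Set M)) ≤
          Submodule.span (MvPolynomial (Fin v) R) ((T' : Set M)) := by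
        apply Submodule.span_mono
        intro y hy
        exact Finset.mem_coe.mpr
          (Finset.mem_biUnion.mpr ⟨g, Finset.mem_coe.mp hg, Finset.mem_coe.mp hy⟩)
      exact hmono h2
  clear hgs
  -- labels
  have hxdata : ∀ x : M, ∃ (aa : ℤ) (nn : ℕ),
      x ∈ (T' : Set M) → (N ≤ nn ∧ x ∈ ℳ (aa, (nn : ℤ))) := by
    intro x
    by_cases hx : x ∈ (T' : Set M)
    · obtain ⟨aa, nn, h1, h2⟩ := hT'T hx
      exact ⟨aa, nn, fun _ => ⟨h1, h2⟩⟩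
    · exact ⟨0, 0, fun h => absurd h hx⟩
  choose aOf nOf hOf using hxdata
  -- uniform torsion
  have htor : ∀ x : M, ∃ t : ℕ, x ∈ (T' : Set M) → ∀ δ : ℕ, t ≤ δ → ∀ r ∈ G.deg (δ : ℤ),
      (MvPolynomial.C r : MvPolynomial (Fin v) R) • x = 0 := by
    intro x
    by_cases hx : x ∈ (T' : Set M)
    · obtain ⟨hN, hxm⟩ := hOf x hx
      by_cases hne : {a : ℤ | ℳ (a, ((nOf x : ℕ) : ℤ)) ≠ ⊥}.Nonempty
      · refine ⟨(sSup {a : ℤ | ℳ (a, ((nOf x : ℕ) : ℤ)) ≠ ⊥} - aOf x + 1).toNat,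
          fun _ δ hδ r hr => ?_⟩
        have hsm := hsmul (δ : ℤ) 0 (aOf x) ((nOf x : ℕ) : ℤ) _ x (hbigC (δ : ℤ) r hr) hxm
        rw [zero_add] at hsm
        have hbot : ℳ ((δ : ℤ) + aOf x, ((nOf x : ℕ) : ℤ)) = ⊥ := by
          by_contra hc
          have hmem : ((δ : ℤ) + aOf x) ∈ {a : ℤ | ℳ (a, ((nOf x : ℕ) : ℤ)) ≠ ⊥} := hc
          have hle := le_csSup (Set.Finite.bddAbove (hfin _ hN)) hmem
          have h2 := Int.self_le_toNat (sSup {a : ℤ | ℳ (a, ((nOf x : ℕ) : ℤ)) ≠ ⊥} - aOf x + 1)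
          omega
        rw [hbot] at hsm
        exact (Submodule.mem_bot k).mp hsm
      · refine ⟨0, fun _ δ _ r hr => ?_⟩
        have hb : ℳ (aOf x, ((nOf x : ℕ) : ℤ)) = ⊥ := by
          by_contra hc
          exact hne ⟨aOf x, hc⟩
        have hx0 : x = 0 := by
          rw [hb] at hxm
          exact (Submodule.mem_bot k).mp hxm
        rw [hx0, smul_zero]
    · exact ⟨0, fun h => absurd h hx⟩
  choose tOf htOf using htor
  -- finite spanning families for the graded pieces of R
  choose sp hsp using hdegFG
  have hspmem : ∀ (δ : ℕ) (r : R), r ∈ sp δ → r ∈ G.deg (δ : ℤ) := by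
    intro δ r hr
    rw [← hsp δ]
    exact Submodule.subset_span hr
  -- the finite generator family
  set P : Set (M × ℤ × ℕ) := {z | ∃ x ∈ (T' : Set M), ∃ δ : ℕ, δ < tOf x ∧ ∃ r ∈ sp δ,
    z = ((MvPolynomial.C r : MvPolynomial (Fin v) R) • x, (δ : ℤ) + aOf x, nOf x)} with hPdef
  have hPfin : P.Finite := by
    have hsub : P ⊆ ⋃ (x : M) (_ : x ∈ (T' : Set M)) (δ : ℕ) (_ : δ ∈ Set.Iio (tOf x))
        (r : R) (_ : r ∈ (sp δ : Set R)),
        {((MvPolynomial.C r : MvPolynomial (Fin v) R) • x, (δ : ℤ) + aOf x, nOf x)} := by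
      rintro z ⟨x, hx, δ, hδ, r, hr, rfl⟩
      simp only [Set.mem_iUnion]
      exact ⟨x, hx, δ, hδ, r, hr, rfl⟩
    apply Set.Finite.subset ?_ hsub
    apply Set.Finite.biUnion T'.finite_toSet
    intro x _
    apply Set.Finite.biUnion (Set.finite_Iio _)
    intro δ _
    apply Set.Finite.biUnion (sp δ).finite_toSet
    intro r _
    exact Set.finite_singleton _
  have hPmem : ∀ z ∈ P, z.1 ∈ ℳ (z.2.1, ((z.2.2 : ℕ) : ℤ)) := by
    rintro z ⟨x, hx, δ, hδ, r, hr, rfl⟩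
    have h := hsmul (δ : ℤ) 0 (aOf x) ((nOf x : ℕ) : ℤ) _ x
      (hbigC (δ : ℤ) r (hspmem δ r hr)) (hOf x hx).2
    rwa [zero_add] at h
  -- homogeneous hulls
  set Good : ℤ × ℤ → Submodule k M := fun c => Submodule.span k
    {m | ∃ z ∈ P, ∃ e : Fin v → ℕ,
      m = (∏ i, MvPolynomial.X i ^ e i : MvPolynomial (Fin v) R) • z.1 ∧
      c.1 = z.2.1 + ∑ i, (e i : ℤ) * (dd i : ℤ) ∧
      c.2 = ((z.2.2 : ℕ) : ℤ) + ∑ i, (e i : ℤ)} with hGdef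
  set U : Submodule k M := ⨆ c : ℤ × ℤ, (Good c ⊓ ℳ c) with hUdef
  -- every multiple of a generator lies in U
  have hgen : ∀ x ∈ (T' : Set M), ∀ s : MvPolynomial (Fin v) R, s • x ∈ U := by
    intro x hx s
    have hmono : ∀ (e : Fin v →₀ ℕ) (r : R),
        (MvPolynomial.monomial e r : MvPolynomial (Fin v) R) • x ∈ U := by
      intro e r
      have hme : (MvPolynomial.monomial e r : MvPolynomial (Fin v) R)
          = MvPolynomial.C r * ∏ i, MvPolynomial.X i ^ e i := by
        rw [MvPolynomial.monomial_eq]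
        congr 1
        rw [Finsupp.prod_fintype]
        intro i; exact pow_zero _
      set L : R →ₗ[k] M := {
        toFun := fun r' =>
          ((MvPolynomial.C r' * ∏ i, MvPolynomial.X i ^ e i : MvPolynomial (Fin v) R)) • x
        map_add' := by
          intro r1 r2
          show ((MvPolynomial.C (r1 + r2) * ∏ i, MvPolynomial.X i ^ e i :
              MvPolynomial (Fin v) R)) • x = _
          rw [map_add, add_mul, add_smul]
        map_smul' := by
          intro a r1
          show ((MvPolynomial.C (a • r1) * ∏ i, MvPolynomial.X i ^ e i :
              MvPolynomial (Fin v) R)) • x =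
            a • ((MvPolynomial.C r1 * ∏ i, MvPolynomial.X i ^ e i :
              MvPolynomial (Fin v) R)) • x
          rw [Algebra.smul_def a r1, map_mul]
          have hCa : (MvPolynomial.C (algebraMap k R a) : MvPolynomial (Fin v) R)
              = algebraMap k (MvPolynomial (Fin v) R) a := by
            rw [IsScalarTower.algebraMap_apply k R (MvPolynomial (Fin v) R) a]
            rfl
          rw [hCa, mul_assoc, ← Algebra.smul_def]
          exact smul_assoc a _ x } with hLdef
      have hLu : ∀ r' : R, L r' ∈ U := by
        intro r'
        have hr' : r' ∈ (⊤ : Submodule k R) := Submodule.mem_top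
        rw [← hdegTop] at hr'
        have hcl : (⨆ δ : ℤ, G.deg δ) ≤ Submodule.comap L U := by
          apply iSup_le
          intro δ r0 hr0
          simp only [Submodule.mem_comap]
          rcases le_or_gt 0 δ with hδ | hδ
          · lift δ to ℕ using hδ with δ'
            by_cases hbigt : tOf x ≤ δ'
            · have h0 : L r0 = 0 := by
                show ((MvPolynomial.C r0 * ∏ i, MvPolynomial.X i ^ e i :
                  MvPolynomial (Fin v) R)) • x = 0
                rw [mul_comm, mul_smul, htOf x hx δ' hbigt r0 hr0, smul_zero]
              rw [h0]; exact zero_mem U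
            · have hr0' : r0 ∈ Submodule.span k ((sp δ' : Set R)) := by
                rw [hsp δ']; exact hr0
              refine Submodule.span_induction ?_ ?_ ?_ ?_ hr0'
              · intro r1 hr1
                have hzP : (((MvPolynomial.C r1 : MvPolynomial (Fin v) R) • x,
                    (δ' : ℤ) + aOf x, nOf x) : M × ℤ × ℕ) ∈ P :=
                  ⟨x, hx, δ', by omega, r1, hr1, rfl⟩
                have hL1 : L r1 = (∏ i, MvPolynomial.X i ^ e i : MvPolynomial (Fin v) R) •
                    ((MvPolynomial.C r1 : MvPolynomial (Fin v) R) • x) := by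
                  show ((MvPolynomial.C r1 * ∏ i, MvPolynomial.X i ^ e i :
                    MvPolynomial (Fin v) R)) • x = _
                  rw [mul_comm, mul_smul]
                set c : ℤ × ℤ := ((∑ i, ((e i : ℕ) : ℤ) * (dd i : ℤ)) + ((δ' : ℤ) + aOf x),
                  (∑ i, ((e i : ℕ) : ℤ)) + ((nOf x : ℕ) : ℤ)) with hcdef
                have hGood : L r1 ∈ Good c := by
                  apply Submodule.subset_span
                  refine ⟨_, hzP, (fun i => e i), hL1, ?_, ?_⟩
                  · show c.1 = ((δ' : ℤ) + aOf x) + ∑ i, ((e i : ℕ) : ℤ) * (dd i : ℤ)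
                    rw [hcdef]; ring
                  · show c.2 = ((nOf x : ℕ) : ℤ) + ∑ i, ((e i : ℕ) : ℤ)
                    rw [hcdef]; ring
                have hMc : L r1 ∈ ℳ c := by
                  rw [hL1, hcdef]
                  exact hsmul _ _ _ _ _ _ (hbigX (fun i => e i)) (hPmem _ hzP)
                exact Submodule.mem_iSup_of_mem c ⟨hGood, hMc⟩
              · rw [map_zero]; exact zero_mem U
              · intro y1 y2 _ _ h1 h2
                rw [map_add]; exact add_mem h1 h2
              · intro a y _ h1
                rw [map_smul]; exact Submodule.smul_mem U a h1
          · rw [G.bot_of_neg δ hδ] at hr0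
            rw [(Submodule.mem_bot k).mp hr0, map_zero]
            exact zero_mem U
        have := hcl hr'
        simpa only [Submodule.mem_comap] using this
      have hfin : (MvPolynomial.monomial e r : MvPolynomial (Fin v) R) • x = L r := by
        rw [hme]; rfl
      rw [hfin]
      exact hLu r
    have hs : s = ∑ e ∈ s.support, MvPolynomial.monomial e (MvPolynomial.coeff e s) :=
      (MvPolynomial.support_sum_monomial_coeff s).symm
    rw [hs, Finset.sum_smul]
    exact Submodule.sum_mem U (fun e _ => hmono e _)
  -- the span of T lies in U
  have hWU : ∀ m ∈ Submodule.span (MvPolynomial (Fin v) R) T, m ∈ U := by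
    have hst : ∀ m', m' ∈ Submodule.span (MvPolynomial (Fin v) R) ((T' : Set M)) →
        ∀ s : MvPolynomial (Fin v) R, s • m' ∈ U := by
      intro m' hm'
      refine Submodule.span_induction (p := fun m' _ => ∀ s : MvPolynomial (Fin v) R, s • m' ∈ U)
        ?_ ?_ ?_ ?_ hm'
      · intro y hy s
        exact hgen y hy s
      · intro s
        rw [smul_zero]; exact zero_mem U
      · intro y1 y2 _ _ h1 h2 s
        rw [smul_add]; exact add_mem (h1 s) (h2 s)
      · intro s' y _ h1 s
        rw [smul_smul]
        exact h1 (s * s')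
    intro m hm
    rw [← hWT'] at hm
    have := hst m hm 1
    rwa [one_smul] at this
  -- projections onto the graded pieces
  set eqv := LinearEquiv.ofBijective (DirectSum.coeLinearMap ℳ) hInternal with heqv
  set pr : ℤ × ℤ → M → M := fun c m => ((eqv.symm m) c : M) with hprdef
  have hpr_same : ∀ (c : ℤ × ℤ) (m : M), m ∈ ℳ c → pr c m = m := by
    intro c m hm
    show ((eqv.symm m) c : M) = m
    rw [hInternal.ofBijective_coeLinearMap_of_mem hm]
  have hpr_ne : ∀ (c c' : ℤ × ℤ) (m : M), m ∈ ℳ c' → c' ≠ c → pr c m = 0 := by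
    intro c c' m hm hne
    show ((eqv.symm m) c : M) = 0
    rw [hInternal.ofBijective_coeLinearMap_of_mem_ne hne hm]
    rfl
  have hpr_add : ∀ (c : ℤ × ℤ) (m1 m2 : M), pr c (m1 + m2) = pr c m1 + pr c m2 := by
    intro c m1 m2
    show (((eqv.symm (m1 + m2))) c : M) = _
    rw [map_add]
    rfl
  have hpr_zero : ∀ c : ℤ × ℤ, pr c 0 = 0 := by
    intro c
    show (((eqv.symm 0)) c : M) = 0
    rw [map_zero]
    rfl
  have hprU : ∀ (c : ℤ × ℤ) (m : M), m ∈ U → pr c m ∈ Good c := by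
    intro c m hm
    refine Submodule.iSup_induction (motive := fun m => pr c m ∈ Good c) _ hm ?_ ?_ ?_
    · intro c' m' hm'
      by_cases hcc : c' = c
      · subst hcc
        rw [hpr_same c' m' hm'.2]
        exact hm'.1
      · rw [hpr_ne c c' m' hm'.2 hcc]
        exact zero_mem _
    · show pr c 0 ∈ Good c
      rw [hpr_zero]; exact zero_mem _
    · intro m1 m2 h1 h2
      show pr c (m1 + m2) ∈ Good c
      rw [hpr_add]; exact add_mem h1 h2
  -- conclusion
  refine ⟨N, P, hPfin, fun n hn a => ?_⟩
  constructor
  · intro hne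
    have hex : ∃ m : M, m ∈ ℳ (a, (n : ℤ)) ∧ m ≠ 0 := by
      by_contra hc
      push_neg at hc
      exact hne ((Submodule.eq_bot_iff _).mpr hc)
    obtain ⟨m, hm, hm0⟩ := hex
    have hmT : m ∈ T := ⟨a, n, hn, hm⟩
    have hmU : m ∈ U := hWU m (Submodule.subset_span hmT)
    have hmG : m ∈ Good (a, (n : ℤ)) := by
      have h := hprU (a, (n : ℤ)) m hmU
      rwa [hpr_same _ _ hm] at h
    by_contra hcon
    push_neg at hcon
    apply hm0
    have hsub : {m' | ∃ z ∈ P, ∃ e : Fin v → ℕ,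
        m' = (∏ i, MvPolynomial.X i ^ e i : MvPolynomial (Fin v) R) • z.1 ∧
        (a, (n : ℤ)).1 = z.2.1 + ∑ i, (e i : ℤ) * (dd i : ℤ) ∧
        (a, (n : ℤ)).2 = ((z.2.2 : ℕ) : ℤ) + ∑ i, (e i : ℤ)} ⊆ {(0 : M)} := by
      rintro m' ⟨z, hz, e, rfl, h1, h2⟩
      by_contra hm'0
      have hm'ne : (∏ i, MvPolynomial.X i ^ e i : MvPolynomial (Fin v) R) • z.1 ≠ 0 := by
        simpa using hm'0
      exact (hcon z hz e hm'ne h1) h2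
    have hGb : Good (a, (n : ℤ)) ≤ ⊥ := by
      apply Submodule.span_le.mpr
      intro y hy
      rw [Submodule.bot_coe]
      exact hsub hy
    exact (Submodule.mem_bot k).mp (hGb hmG)
  · rintro ⟨z, hz, e, hnz, ha, hn2⟩
    intro hbot
    apply hnz
    have h := hsmul (∑ i, (e i : ℤ) * (dd i : ℤ)) (∑ i, (e i : ℤ)) z.2.1 ((z.2.2 : ℕ) : ℤ)
      _ z.1 (hbigX e) (hPmem z hz)
    have hc : (((∑ i, (e i : ℤ) * (dd i : ℤ)) + z.2.1, (∑ i, (e i : ℤ)) + ((z.2.2 : ℕ) : ℤ))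
        : ℤ × ℤ) = (a, (n : ℤ)) := by
      rw [Prod.mk.injEq]
      constructor
      · omega
      · omega
    rw [hc, hbot] at h
    exact (Submodule.mem_bot k).mp h


/-- Let `M` be a finitely generated bigraded module over the bigraded polynomial ring
`S = R[y₁, …, y_v]` (with `bideg y_i = (d_i, 1)`) such that the graded `R`-module
`M_n = ⊕_a M_{(a,n)}` has finite length (i.e. finitely many nonvanishing degrees) for
all large `n`.  Then either `M_n = 0` for all large `n`, or the largest nonvanishing
degree `a(M_n)` is eventually a linear function of `n` with slope some `d_i`. -/
theorem stmt15 (G : StdGraded k R) (v : ℕ) (dd : Fin v → ℕ)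
    (M : Type) [AddCommGroup M] [Module (MvPolynomial (Fin v) R) M]
    [Module k M] [IsScalarTower k (MvPolynomial (Fin v) R) M]
    (ℳ : ℤ × ℤ → Submodule k M)
    (hInternal : DirectSum.IsInternal ℳ)
    (hfg : Module.Finite (MvPolynomial (Fin v) R) M)
    (hsmul : ∀ (a b cg e : ℤ) (p : MvPolynomial (Fin v) R) (x : M),
      p ∈ bigradePoly G dd a b → x ∈ ℳ (cg, e) → p • x ∈ ℳ (a + cg, b + e))
    (hfl : ∃ N : ℕ, ∀ n : ℕ, N ≤ n → {a : ℤ | ℳ (a, (n : ℤ)) ≠ ⊥}.Finite) :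
    (∃ N : ℕ, ∀ n : ℕ, N ≤ n → ∀ a : ℤ, ℳ (a, (n : ℤ)) = ⊥) ∨
      (∃ (iv : Fin v) (e : ℤ) (N : ℕ), ∀ n : ℕ, N ≤ n →
        (∃ a : ℤ, ℳ (a, (n : ℤ)) ≠ ⊥) ∧
        sSup {a : ℤ | ℳ (a, (n : ℤ)) ≠ ⊥} = (dd iv : ℤ) * n + e) := by

  classical
  obtain ⟨N0, P, hPfin, hKey⟩ := key15 G v dd M ℳ hInternal hfg hsmul hfl
  obtain ⟨N, hfin⟩ := hfl
  set NN := max N N0 with hNN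
  set Z : M × ℤ × ℕ → Set (Fin v → ℕ) :=
    fun z => {e | (∏ i, MvPolynomial.X i ^ e i : MvPolynomial (Fin v) R) • z.1 ≠ 0} with hZdef
  have hZdown : ∀ z, Aux15.IsDown (Z z) := by
    intro z e he f hf
    intro h0
    apply he
    have hsplit : (∏ i, MvPolynomial.X i ^ e i : MvPolynomial (Fin v) R)
        = (∏ i, MvPolynomial.X i ^ (e i - f i)) * ∏ i, MvPolynomial.X i ^ f i := by
      rw [← Finset.prod_mul_distrib]
      refine Finset.prod_congr rfl (fun i _ => ?_)
      rw [← pow_add]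
      congr 1
      have hfe : f i ≤ e i := hf i
      omega
    show (∏ i, MvPolynomial.X i ^ e i : MvPolynomial (Fin v) R) • z.1 = 0
    rw [hsplit, mul_smul, h0, smul_zero]
  have hcast : ∀ e : Fin v → ℕ, (∑ i, (e i : ℤ)) = ((Aux15.tot e : ℕ) : ℤ) := by
    intro e
    unfold Aux15.tot
    push_cast
    rfl
  have hA : ∀ n : ℕ, NN ≤ n → {a : ℤ | ℳ (a, (n : ℤ)) ≠ ⊥} =
      ⋃ (q : ↥P), Aux15.levV dd (Z q.val) q.val.2.1 q.val.2.2 n := by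
    intro n hn
    ext a
    rw [Set.mem_setOf_eq, hKey n (le_trans (le_max_right _ _) hn) a]
    constructor
    · rintro ⟨z, hz, e, hne, ha, hn2⟩
      have h1 : n = z.2.2 + Aux15.tot e := by
        have := hcast e
        omega
      exact Set.mem_iUnion.mpr ⟨⟨z, hz⟩, e, hne, h1, ha⟩
    · intro h
      obtain ⟨q, e, he, h1, h2⟩ := Set.mem_iUnion.mp h
      refine ⟨q.val, q.prop, e, he, h2, ?_⟩
      have := hcast e
      omega
  haveI := hPfin.fintype
  have hdich : ∀ q : ↥P,
      (∃ ν, ∀ n : ℕ, ν ≤ n → Aux15.levV dd (Z q.val) q.val.2.1 q.val.2.2 n = ∅) ∨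
      (∃ (i : Fin v) (c : ℤ) (N1 : ℕ), ∀ n : ℕ, N1 ≤ n →
        ((dd i : ℤ) * n + c) ∈ Aux15.levV dd (Z q.val) q.val.2.1 q.val.2.2 n ∧
        ∀ a ∈ Aux15.levV dd (Z q.val) q.val.2.1 q.val.2.2 n, a ≤ (dd i : ℤ) * n + c) := by
    intro q
    by_cases hinf : (Z q.val).Infinite
    · right
      exact Aux15.comb dd (Z q.val) (hZdown q.val) hinf q.val.2.1 q.val.2.2
    · left
      exact Aux15.comb_fin dd (Z q.val) (Set.not_infinite.mp hinf) _ _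
  rcases Aux15.combine dd
      (fun (q : ↥P) n => Aux15.levV dd (Z q.val) q.val.2.1 q.val.2.2 n) hdich with
    ⟨N1, hN1⟩ | ⟨i, c, N1, hN1⟩
  · left
    refine ⟨max NN N1, fun n hn a => ?_⟩
    by_contra hne
    have ha : a ∈ {a : ℤ | ℳ (a, (n : ℤ)) ≠ ⊥} := hne
    rw [hA n (le_trans (le_max_left _ _) hn)] at ha
    obtain ⟨q, hq⟩ := Set.mem_iUnion.mp ha
    rw [hN1 n (le_trans (le_max_right _ _) hn) q] at hq
    exact hq
  · right
    refine ⟨i, c, max NN N1, fun n hn => ?_⟩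
    obtain ⟨hmem, hub⟩ := hN1 n (le_trans (le_max_right _ _) hn)
    have hAn := hA n (le_trans (le_max_left _ _) hn)
    have hmem' : ((dd i : ℤ) * n + c) ∈ {a : ℤ | ℳ (a, (n : ℤ)) ≠ ⊥} := by
      rw [hAn]; exact hmem
    constructor
    · exact ⟨(dd i : ℤ) * n + c, hmem'⟩
    · apply le_antisymm
      · apply csSup_le ⟨(dd i : ℤ) * n + c, hmem'⟩
        intro a ha
        have ha' : a ∈ ⋃ (q : ↥P), Aux15.levV dd (Z q.val) q.val.2.1 q.val.2.2 n := by
          rw [← hAn]; exact ha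
        exact hub a ha'
      · apply le_csSup
        · apply Set.Finite.bddAbove
          apply hfin n
          have : NN ≤ n := le_trans (le_max_left _ _) hn
          omega
        · exact hmem'
end
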